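/- arXiv:1711.09853 — 9 statements merged into one kernel-verified Lean document; each statement's English description precedes it below -/
import Mathlib

section
/- Let a ∈ ℝ, σ > 0, D > 0 be real numbers. Consider the optimization problem: minimize −(1/2)·log Q + (1/2)·log σ over real numbers P > 0 and Q > 0 subject to (i) P ≤ a²·P + σ, (ii) P ≤ D, and (iii) the 2×2 real matrix [[P − Q, P·a], [a·P, a²·P + σ]] is positive semidefinite. Then the infimum of this problem equals max{0, (1/2)·log(a² + σ/D)}, and the infimum is attained. (This shows that the semidefinite representation of the Gaussian SRD function specializes, in the scalar case, to the known closed-form scalar SRD formula.) -/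
lemma psd_form (p q r : ℝ) (hp : 0 ≤ p) (hr : 0 ≤ r) (hdet : q ^ 2 ≤ p * r) :
    (!![p, q; q, r] : Matrix (Fin 2) (Fin 2) ℝ).PosSemidef := by
  refine Matrix.PosSemidef.of_dotProduct_mulVec_nonneg ?_ ?_
  · ext i j
    fin_cases i <;> fin_cases j <;> simp [Matrix.conjTranspose_apply]
  · intro x
    simp [Matrix.mulVec, dotProduct, Fin.sum_univ_two]
    rcases eq_or_lt_of_le hp with h | h
    · have hq : q = 0 := by nlinarith
      subst hq
      rw [← h]
      have := mul_nonneg hr (sq_nonneg (x 1))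
      nlinarith
    · nlinarith [sq_nonneg (p * x 0 + q * x 1), mul_nonneg (mul_nonneg hp hr) (sq_nonneg (x 1)),
        mul_nonneg (sq_nonneg q) (sq_nonneg (x 1))]

lemma psd_det (p q r : ℝ) (h : (!![p, q; q, r] : Matrix (Fin 2) (Fin 2) ℝ).PosSemidef) :
    0 ≤ p ∧ 0 ≤ r ∧ q ^ 2 ≤ p * r := by
  have h0 := h.dotProduct_mulVec_nonneg ![1, 0]
  have h1 := h.dotProduct_mulVec_nonneg ![0, 1]
  have h2 := h.dotProduct_mulVec_nonneg ![r, -q]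
  have h3 := h.dotProduct_mulVec_nonneg ![q, -(p+1)]
  simp [Matrix.mulVec, dotProduct, Fin.sum_univ_two] at h0 h1 h2 h3
  refine ⟨h0, h1, ?_⟩
  rcases eq_or_lt_of_le h1 with hr | hr
  · nlinarith
  · nlinarith

/-- The scalar specialization of the semidefinite representation of the Gaussian
sequential rate-distortion function equals the closed-form scalar SRD formula
`max {0, (1/2)·log(a² + σ/D)}`, and the infimum is attained. -/
theorem stmt_1 (a σ D : ℝ) (hσ : σ > 0) (hD : D > 0) :
    IsLeast
      {x : ℝ | ∃ P Q : ℝ, P > 0 ∧ Q > 0 ∧ P ≤ a ^ 2 * P + σ ∧ P ≤ D ∧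
        (!![P - Q, P * a; a * P, a ^ 2 * P + σ]).PosSemidef ∧
        x = -(1 / 2) * Real.log Q + (1 / 2) * Real.log σ}
      (max 0 ((1 / 2) * Real.log (a ^ 2 + σ / D))) := by
  constructor
  · -- membership: the optimum is attained
    rcases le_total (a ^ 2 + σ / D) 1 with hcase | hcase
    · -- max = 0, attained at P = σ/(1-a²), Q = σ
      have ha2 : a ^ 2 < 1 := by
        have : 0 < σ / D := div_pos hσ hD
        linarith
      have h1a : 0 < 1 - a ^ 2 := by linarith
      set P : ℝ := σ / (1 - a ^ 2) with hP
      have hPpos : 0 < P := div_pos hσ h1a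
      have hPeq : a ^ 2 * P + σ = P := by
        rw [hP]
        field_simp
        ring
      have hmax : max 0 ((1 / 2) * Real.log (a ^ 2 + σ / D)) = 0 := by
        apply max_eq_left
        have : Real.log (a ^ 2 + σ / D) ≤ 0 :=
          Real.log_nonpos (by positivity) hcase
        linarith
      rw [hmax]
      refine ⟨P, σ, hPpos, hσ, le_of_eq hPeq.symm, ?_, ?_, by ring⟩
      · -- P ≤ D : σ/(1-a²) ≤ D since σ/D ≤ 1 - a²
        rw [hP, div_le_iff₀ h1a]
        have : σ / D ≤ 1 - a ^ 2 := by linarith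
        calc σ = (σ / D) * D := by field_simp
        _ ≤ (1 - a ^ 2) * D := by nlinarith
        _ = D * (1 - a ^ 2) := by ring
      · have : P * a = a * P := mul_comm _ _
        rw [this]
        apply psd_form
        · nlinarith
        · nlinarith
        · have : P - σ = a ^ 2 * P := by nlinarith
          rw [this]
          nlinarith
    · -- max = (1/2) log(a² + σ/D), attained at P = D, Q = Dσ/(a²D + σ)
      have hden : 0 < a ^ 2 * D + σ := by positivity
      set Q : ℝ := D * σ / (a ^ 2 * D + σ) with hQ
      have hQpos : 0 < Q := by positivity
      have hc : 0 ≤ (1 / 2) * Real.log (a ^ 2 + σ / D) := by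
        have := Real.log_nonneg hcase
        linarith
      rw [max_eq_right hc]
      have hDle : D ≤ a ^ 2 * D + σ := by
        have h1 : 1 ≤ a ^ 2 + σ / D := hcase
        have : D * 1 ≤ D * (a ^ 2 + σ / D) := by nlinarith
        calc D = D * 1 := by ring
        _ ≤ D * (a ^ 2 + σ / D) := this
        _ = a ^ 2 * D + σ := by field_simp
      refine ⟨D, Q, hD, hQpos, hDle, le_refl D, ?_, ?_⟩
      · have : D * a = a * D := mul_comm _ _
        rw [this]
        apply psd_form
        · -- D - Q ≥ 0
          rw [hQ, sub_nonneg, div_le_iff₀ hden]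
          nlinarith [sq_nonneg (a * D)]
        · linarith
        · -- (a D)² ≤ (D - Q)(a²D + σ)
          have hDQ : (D - Q) * (a ^ 2 * D + σ) = a ^ 2 * D ^ 2 := by
            rw [hQ]
            field_simp
            ring
          nlinarith
      · -- value equals (1/2) log(a² + σ/D)
        have hratio : a ^ 2 + σ / D = σ / Q := by
          rw [hQ]
          field_simp
        rw [hratio, Real.log_div (ne_of_gt hσ) (ne_of_gt hQpos)]
        ring
  · -- lower bound
    rintro x ⟨P, Q, hP, hQ, hPc, hPD, hpsd, rfl⟩
    have hPa : (!![P - Q, a * P; a * P, a ^ 2 * P + σ]).PosSemidef := by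
      have : P * a = a * P := mul_comm _ _
      rwa [this] at hpsd
    obtain ⟨h1, h2, h3⟩ := psd_det _ _ _ hPa
    -- h3 : (aP)² ≤ (P-Q)(a²P+σ), so Q(a²P+σ) ≤ Pσ
    have hden : 0 < a ^ 2 * P + σ := by positivity
    have key : Q * (a ^ 2 * P + σ) ≤ P * σ := by nlinarith
    apply max_le
    · -- 0 ≤ value : Q ≤ σ
      have hQσ : Q ≤ σ := by nlinarith
      have := Real.log_le_log hQ hQσ
      linarith
    · -- (1/2) log(a²+σ/D) ≤ value
      have ht : 0 < a ^ 2 + σ / D := by positivity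
      have hkey2 : (a ^ 2 + σ / D) * Q ≤ σ := by
        have h4 : (a ^ 2 * D + σ) * Q * P ≤ σ * D * P := by
          nlinarith [mul_le_mul_of_nonneg_left hPD (mul_nonneg hσ.le hQ.le),
            mul_le_mul_of_nonneg_right key hD.le]
        have h5 : (a ^ 2 * D + σ) * Q ≤ σ * D := le_of_mul_le_mul_right h4 hP
        have h6 : (a ^ 2 + σ / D) * Q = (a ^ 2 * D + σ) * Q / D := by
          field_simp
        rw [h6, div_le_iff₀ hD]
        linarith
      have hlog : Real.log ((a ^ 2 + σ / D) * Q) ≤ Real.log σ :=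
        Real.log_le_log (by positivity) hkey2
      rw [Real.log_mul (ne_of_gt ht) (ne_of_gt hQ)] at hlog
      linarith
end

section
/- Let P and Σ be p×p real positive definite matrices, A an arbitrary p×p real matrix, and Q a p×p real symmetric matrix. Then the 2p×2p block matrix [[P − Q, P·Aᵀ], [A·P, A·P·Aᵀ + Σ]] is positive semidefinite if and only if (P⁻¹ + Aᵀ·Σ⁻¹·A)⁻¹ − Q is positive semidefinite. -/
open Matrix

/-- Schur-complement characterization: for `P ≻ 0`, `Σ ≻ 0`, `Q` symmetric, the block
matrix `[[P − Q, P·Aᵀ], [A·P, A·P·Aᵀ + Σ]]` is positive semidefinite iff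
`(P⁻¹ + Aᵀ·Σ⁻¹·A)⁻¹ - Q ⪰ 0`. -/
theorem stmt_4 {p : ℕ} (P Sw A Q : Matrix (Fin p) (Fin p) ℝ)
    (hP : P.PosDef) (hSw : Sw.PosDef) (hQ : Q.IsHermitian) :
    (Matrix.fromBlocks (P - Q) (P * Aᵀ) (A * P) (A * P * Aᵀ + Sw)).PosSemidef ↔
      ((P⁻¹ + Aᵀ * Sw⁻¹ * A)⁻¹ - Q).PosSemidef := by
  have hAH : Aᴴ = Aᵀ := conjTranspose_eq_transpose_of_trivial A
  have hAPA : (A * P * Aᵀ).PosSemidef := by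
    rw [← hAH]
    exact hP.posSemidef.mul_mul_conjTranspose_same A
  have hS : (A * P * Aᵀ + Sw).PosDef := Matrix.PosDef.posSemidef_add hAPA hSw
  haveI : Invertible (A * P * Aᵀ + Sw) := hS.isUnit.invertible
  have hPdet : IsUnit P.det := (Matrix.isUnit_iff_isUnit_det _).1 hP.isUnit
  have hSwdet : IsUnit Sw.det := (Matrix.isUnit_iff_isUnit_det _).1 hSw.isUnit
  have hPT : Pᵀ = P := by
    rw [← conjTranspose_eq_transpose_of_trivial]; exact hP.isHermitian.eq
  have hBH : (P * Aᵀ)ᴴ = A * P := by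
    simp [conjTranspose_mul, conjTranspose_eq_transpose_of_trivial, hPT]
  have hwood : (P⁻¹ + Aᵀ * Sw⁻¹ * A)⁻¹
      = P - P * Aᵀ * (A * P * Aᵀ + Sw)⁻¹ * (A * P) := by
    have hu : IsUnit ((Sw⁻¹)⁻¹ + A * (P⁻¹)⁻¹ * Aᵀ) := by
      rw [Matrix.nonsing_inv_nonsing_inv _ hSwdet, Matrix.nonsing_inv_nonsing_inv _ hPdet]
      rw [add_comm]
      exact hS.isUnit
    have h := Matrix.add_mul_mul_inv_eq_sub P⁻¹ Aᵀ Sw⁻¹ A hP.inv.isUnit hSw.inv.isUnit hu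
    rw [Matrix.nonsing_inv_nonsing_inv _ hSwdet, Matrix.nonsing_inv_nonsing_inv _ hPdet] at h
    rw [h, add_comm Sw (A * P * Aᵀ), Matrix.mul_assoc (P * Aᵀ * _) A P]
  rw [show fromBlocks (P - Q) (P * Aᵀ) (A * P) (A * P * Aᵀ + Sw)
      = fromBlocks (P - Q) (P * Aᵀ) ((P * Aᵀ)ᴴ) (A * P * Aᵀ + Sw) from by rw [hBH],
    Matrix.PosDef.fromBlocks₂₂ _ _ hS, hBH, hwood, sub_right_comm]
end

section
/- Let P and Σ be p×p real positive definite matrices, A an arbitrary p×p real matrix, and Q a p×p real positive definite matrix. If the 2p×2p block matrix [[P − Q, P·Aᵀ], [A·P, A·P·Aᵀ + Σ]] is positive semidefinite, then det(Q) ≤ det(Σ)·det(P)/det(A·P·Aᵀ + Σ), i.e., −(1/2)·log det Q + (1/2)·log det Σ ≥ (1/2)·log det(A·P·Aᵀ + Σ) − (1/2)·log det P. -/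
open Matrix

private lemma one_le_eigs {n : Type*} [Fintype n] [DecidableEq n] {N : Matrix n n ℝ}
    (hN : N.IsHermitian) (h : (N - 1).PosSemidef) (i : n) : 1 ≤ hN.eigenvalues i := by
  set v : n → ℝ := ⇑(hN.eigenvectorBasis i) with hv
  have h2 := h.dotProduct_mulVec_nonneg v
  rw [sub_mulVec, one_mulVec, dotProduct_sub] at h2
  have hnorm : dotProduct (star v) v = 1 := by
    have h1 : ‖hN.eigenvectorBasis i‖ = 1 := hN.eigenvectorBasis.orthonormal.1 i
    have := EuclideanSpace.inner_eq_star_dotProduct (𝕜 := ℝ)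
      (hN.eigenvectorBasis i) (hN.eigenvectorBasis i)
    rw [real_inner_self_eq_norm_sq, h1] at this
    simpa using this.symm
  have hval : hN.eigenvalues i = dotProduct (star v) (N *ᵥ v) := by
    simpa using hN.eigenvalues_eq i
  rw [hnorm] at h2
  linarith [h2, hval]

open scoped MatrixOrder in
private lemma det_mono {n : Type*} [Fintype n] [DecidableEq n] {Q M : Matrix n n ℝ}
    (hQ : Q.PosDef) (hM : (M - Q).PosSemidef) : Q.det ≤ M.det := by
  set S := CFC.sqrt Q with hSdef
  have hS : S.PosSemidef := (CFC.sqrt_nonneg Q).posSemidef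
  have hSS : S * S = Q := CFC.sqrt_mul_sqrt_self Q hQ.posSemidef.nonneg
  have hdetS : S.det * S.det = Q.det := by rw [← det_mul, hSS]
  have hQdet : 0 < Q.det := hQ.det_pos
  have hdetS_nonneg : 0 ≤ S.det := by
    rw [hS.1.det_eq_prod_eigenvalues]
    exact Finset.prod_nonneg fun i _ => by simpa using hS.eigenvalues_nonneg i
  have hdetSpos : 0 < S.det := by
    rcases eq_or_lt_of_le hdetS_nonneg with h | h
    · exfalso; rw [← h, mul_zero] at hdetS; linarith
    · exact h
  haveI : Invertible S := invertibleOfIsUnitDet S hdetSpos.ne'.isUnit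
  have hSinv : (S⁻¹)ᴴ = S⁻¹ := hS.1.inv
  set N := S⁻¹ * M * S⁻¹ with hNdef
  have hQ1 : S⁻¹ * Q * S⁻¹ = 1 := by
    rw [← hSS, ← Matrix.mul_assoc, Matrix.nonsing_inv_mul S hdetSpos.ne'.isUnit,
      Matrix.one_mul, Matrix.mul_nonsing_inv S hdetSpos.ne'.isUnit]
  have hN1 : S⁻¹ * (M - Q) * (S⁻¹)ᴴ = N - 1 := by
    rw [hSinv, Matrix.mul_sub, Matrix.sub_mul, hQ1]
  have hpsd : (N - 1).PosSemidef := by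
    rw [← hN1]; exact hM.mul_mul_conjTranspose_same S⁻¹
  have hNherm : N.IsHermitian := by
    have := hpsd.1.add (Matrix.isHermitian_one)
    rwa [sub_add_cancel] at this
  have hdetN : 1 ≤ N.det := by
    have hprod : N.det = ∏ i, hNherm.eigenvalues i := by
      simpa using hNherm.det_eq_prod_eigenvalues
    rw [hprod]
    calc (1:ℝ) = ∏ _i : n, 1 := by simp
      _ ≤ ∏ i, hNherm.eigenvalues i :=
        Finset.prod_le_prod (fun i _ => zero_le_one) (fun i _ => one_le_eigs hNherm hpsd i)
  have hdetinv : S⁻¹.det = S.det⁻¹ := by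
    rw [Matrix.det_nonsing_inv, Ring.inverse_eq_inv']
  have hNeq : N.det = M.det / Q.det := by
    rw [hNdef, det_mul, det_mul, hdetinv, ← hdetS]
    field_simp
  rw [hNeq] at hdetN
  exact (one_le_div hQdet).mp hdetN

/-- If the block matrix `[[P − Q, P·Aᵀ], [A·P, A·P·Aᵀ + Σ]]` is positive semidefinite
with `P, Σ, Q ≻ 0`, then `det Q ≤ det Σ · det P / det(A·P·Aᵀ + Σ)`, equivalently
`−(1/2)·log det Q + (1/2)·log det Σ ≥ (1/2)·log det(A·P·Aᵀ + Σ) − (1/2)·log det P`. -/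
theorem stmt_5 {p : ℕ} (P Sw A Q : Matrix (Fin p) (Fin p) ℝ)
    (hP : P.PosDef) (hSw : Sw.PosDef) (hQ : Q.PosDef)
    (hblk : (Matrix.fromBlocks (P - Q) (P * Aᵀ) (A * P) (A * P * Aᵀ + Sw)).PosSemidef) :
    Q.det ≤ Sw.det * P.det / (A * P * Aᵀ + Sw).det ∧
      -(1 / 2) * Real.log Q.det + (1 / 2) * Real.log Sw.det ≥
        (1 / 2) * Real.log (A * P * Aᵀ + Sw).det - (1 / 2) * Real.log P.det := by
  classical
  set D := A * P * Aᵀ + Sw with hDdef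
  have hAT : (P * Aᵀ)ᴴ = A * P := by
    rw [conjTranspose_mul]
    have h1 : (Aᵀ)ᴴ = A := by ext i j; simp [conjTranspose_apply]
    rw [h1, hP.isHermitian.eq]
  have hAPA : (A * P * Aᵀ).PosSemidef := by
    have := hP.posSemidef.mul_mul_conjTranspose_same A
    have hAH : Aᴴ = Aᵀ := by ext i j; simp [conjTranspose_apply]
    rwa [hAH] at this
  have hD : D.PosDef := Matrix.PosDef.posSemidef_add hAPA hSw
  have hDd : (0:ℝ) < D.det := hD.det_pos
  haveI : Invertible D := invertibleOfIsUnitDet D hD.det_pos.ne'.isUnit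
  haveI : Invertible P := invertibleOfIsUnitDet P hP.det_pos.ne'.isUnit
  have hblk' : (fromBlocks (P - Q) (P * Aᵀ) ((P * Aᵀ)ᴴ) D).PosSemidef := by
    rwa [hAT]
  rw [PosDef.fromBlocks₂₂ _ _ hD] at hblk'
  rw [hAT] at hblk'
  set M := P - P * Aᵀ * D⁻¹ * (A * P) with hMdef
  have hMQ : (M - Q).PosSemidef := by
    have h : P - Q - P * Aᵀ * D⁻¹ * (A * P) = M - Q := by rw [hMdef]; abel
    rwa [h] at hblk'
  have hdetle : Q.det ≤ M.det := det_mono hQ hMQ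
  have hblkdet1 : (fromBlocks P (P * Aᵀ) (A * P) D).det = D.det * M.det := by
    rw [det_fromBlocks₂₂, invOf_eq_nonsing_inv]
  have hblkdet2 : (fromBlocks P (P * Aᵀ) (A * P) D).det = P.det * Sw.det := by
    rw [det_fromBlocks₁₁, invOf_eq_nonsing_inv]
    congr 1
    have h : A * P * P⁻¹ * (P * Aᵀ) = A * P * Aᵀ := by
      rw [Matrix.mul_assoc (A * P) P⁻¹ (P * Aᵀ), ← Matrix.mul_assoc P⁻¹ P Aᵀ,
        Matrix.nonsing_inv_mul P hP.det_pos.ne'.isUnit, Matrix.one_mul]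
    rw [h]
    congr 1
    rw [hDdef]
    abel
  have hdetM : M.det = Sw.det * P.det / D.det := by
    have h := hblkdet1.symm.trans hblkdet2
    rw [eq_div_iff hDd.ne']
    linear_combination h
  have main : Q.det ≤ Sw.det * P.det / D.det := hdetM ▸ hdetle
  refine ⟨main, ?_⟩
  have hQd : (0:ℝ) < Q.det := hQ.det_pos
  have hPd : (0:ℝ) < P.det := hP.det_pos
  have hSd : (0:ℝ) < Sw.det := hSw.det_pos
  have hlog : Real.log Q.det ≤ Real.log (Sw.det * P.det / D.det) :=
    Real.log_le_log hQd main
  rw [Real.log_div (by positivity) hDd.ne', Real.log_mul hSd.ne' hPd.ne'] at hlog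
  linarith [hlog]
end

section
/- Let M be a p×p real positive semidefinite (symmetric) matrix. Then the map P ↦ log det(P⁻¹ + M) is convex on the cone of p×p real positive definite matrices: for all positive definite P₁, P₂ and all t ∈ [0,1], log det((t·P₁ + (1−t)·P₂)⁻¹ + M) ≤ t·log det(P₁⁻¹ + M) + (1−t)·log det(P₂⁻¹ + M). -/
open Matrix

open Finset
set_option linter.unusedSectionVars false

namespace StmtAux

variable {n : Type*} [Fintype n] [DecidableEq n]

lemma transpose_eq {A : Matrix n n ℝ} (hA : A.IsHermitian) : Aᵀ = A :=
  (conjTranspose_eq_transpose_of_trivial A) ▸ hA.eq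

lemma dot_shift {A : Matrix n n ℝ} (hA : A.IsHermitian) (x y : n → ℝ) :
    (A *ᵥ x) ⬝ᵥ y = x ⬝ᵥ (A *ᵥ y) := by
  rw [dotProduct_comm, dotProduct_mulVec, ← mulVec_transpose, transpose_eq hA, dotProduct_comm]

open scoped MatrixOrder in
lemma exists_sqrt {A : Matrix n n ℝ} (hA : A.PosDef) :
    ∃ S : Matrix n n ℝ, S.PosSemidef ∧ S * S = A :=
  ⟨CFC.sqrt A, (CFC.sqrt_nonneg A).posSemidef, CFC.sqrt_mul_sqrt_self A hA.posSemidef.nonneg⟩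

lemma posDef_smul {A : Matrix n n ℝ} (hA : A.PosDef) {c : ℝ} (hc : 0 < c) :
    (c • A).PosDef := by
  refine PosDef.of_dotProduct_mulVec_pos ?_ (fun x hx => ?_)
  · simp [Matrix.IsHermitian, conjTranspose_smul, hA.1.eq, transpose_eq hA.1]
  · rw [smul_mulVec, dotProduct_smul]
    exact mul_pos hc (hA.dotProduct_mulVec_pos hx)

lemma det_smul_one_add_smul {C : Matrix n n ℝ} (hC : C.IsHermitian) (a b : ℝ) :
    (a • (1 : Matrix n n ℝ) + b • C).det = ∏ i, (a + b * hC.eigenvalues i) := by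
  set U : Matrix n n ℝ := (hC.eigenvectorUnitary : Matrix n n ℝ) with hUdef
  set D : Matrix n n ℝ := diagonal (RCLike.ofReal ∘ hC.eigenvalues) with hDdef
  have hU : U * star U = 1 := (Matrix.mem_unitaryGroup_iff).mp hC.eigenvectorUnitary.2
  have key : U * (a • 1 + b • D) * star U = a • (1 : Matrix n n ℝ) + b • C := by
    rw [mul_add, add_mul, Matrix.mul_smul, Matrix.smul_mul, mul_one, hU,
        Matrix.mul_smul, Matrix.smul_mul, hC.spectral_theorem, Unitary.conjStarAlgAut_apply]
  rw [← key, det_mul_right_comm, hU, one_mul]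
  have : a • (1 : Matrix n n ℝ) + b • D = diagonal (fun i => a + b * hC.eigenvalues i) := by
    rw [hDdef, ← diagonal_one, ← diagonal_smul, ← diagonal_smul, diagonal_add]
    congr 1
    funext i
    simp [Pi.smul_apply]
  rw [this, det_diagonal]


lemma det_le_det_of_sub_posSemidef {A B : Matrix n n ℝ} (hA : A.PosDef)
    (h : (B - A).PosSemidef) : A.det ≤ B.det := by
  obtain ⟨S, hS, hSS⟩ := exists_sqrt hA
  have hSdet : S.det ≠ 0 := by
    intro h0
    have : A.det = 0 := by rw [← hSS, det_mul, h0, mul_zero]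
    exact hA.det_pos.ne' this
  have hSunit : IsUnit S.det := hSdet.isUnit
  have hSinv : S⁻¹ * S = 1 := nonsing_inv_mul _ hSunit
  have hSinv' : S * S⁻¹ = 1 := mul_nonsing_inv _ hSunit
  have hSinvH : S⁻¹.IsHermitian := hS.1.inv
  set K := S⁻¹ * (B - A) * S⁻¹ with hKdef
  have hKpsd : K.PosSemidef := by
    have := h.mul_mul_conjTranspose_same S⁻¹
    rwa [hSinvH.eq] at this
  have hmid : S * (S⁻¹ * (B - A) * S⁻¹) * S = B - A := by
    simp only [← mul_assoc]
    rw [hSinv', one_mul, mul_assoc, hSinv, mul_one]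
  have hfact : B = S * (1 + K) * S := by
    rw [mul_add, add_mul, mul_one, hSS, hKdef, hmid, add_sub_cancel]
  have hdet : B.det = A.det * (1 + K).det := by
    rw [hfact, det_mul_right_comm, hSS, det_mul]
  have hge : 1 ≤ (1 + K).det := by
    rw [show (1 + K : Matrix n n ℝ) = (1:ℝ) • 1 + (1:ℝ) • K by simp,
      det_smul_one_add_smul hKpsd.1 1 1]
    have h1' : ∏ _i : n, (1:ℝ) ≤ ∏ i, (1 + 1 * hKpsd.1.eigenvalues i) := by
      refine Finset.prod_le_prod (fun i _ => by norm_num) (fun i _ => ?_)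
      nlinarith [hKpsd.eigenvalues_nonneg i]
    simpa using h1'
  calc A.det = A.det * 1 := (mul_one _).symm
    _ ≤ A.det * (1 + K).det := by
        exact mul_le_mul_of_nonneg_left hge hA.det_pos.le
    _ = B.det := hdet.symm

lemma log_det_concave {A B : Matrix n n ℝ} (hA : A.PosDef) (hB : B.PosDef)
    {t : ℝ} (h0 : 0 ≤ t) (h1 : t ≤ 1) :
    t * Real.log A.det + (1 - t) * Real.log B.det ≤
      Real.log (t • A + (1 - t) • B).det := by
  obtain ⟨S, hS, hSS⟩ := exists_sqrt hA
  have hSdet : S.det ≠ 0 := by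
    intro h0'
    have : A.det = 0 := by rw [← hSS, det_mul, h0', mul_zero]
    exact hA.det_pos.ne' this
  have hSunit : IsUnit S.det := hSdet.isUnit
  have hSinv : S⁻¹ * S = 1 := nonsing_inv_mul _ hSunit
  have hSinv' : S * S⁻¹ = 1 := mul_nonsing_inv _ hSunit
  have hSinvH : S⁻¹.IsHermitian := hS.1.inv
  set C := S⁻¹ * B * S⁻¹ with hCdef
  have hCpd : C.PosDef := by
    refine PosDef.of_dotProduct_mulVec_pos ?_ (fun x hx => ?_)
    · have := (hB.posSemidef.mul_mul_conjTranspose_same S⁻¹).1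
      rwa [hSinvH.eq] at this
    · have hx' : S⁻¹ *ᵥ x ≠ 0 := by
        intro h0'
        apply hx
        have := congrArg (fun v => S *ᵥ v) h0'
        simpa [mulVec_mulVec, hSinv', one_mulVec] using this
      have := hB.dotProduct_mulVec_pos hx'
      simpa [hCdef, star_trivial, ← mulVec_mulVec, dot_shift hSinvH] using this
  have hmid : S * (S⁻¹ * B * S⁻¹) * S = B := by
    simp only [← mul_assoc]
    rw [hSinv', one_mul, mul_assoc, hSinv, mul_one]
  have hfact : t • A + (1 - t) • B = S * (t • 1 + (1 - t) • C) * S := by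
    rw [mul_add, add_mul, Matrix.mul_smul, Matrix.smul_mul, mul_one, hSS,
      Matrix.mul_smul, Matrix.smul_mul, hCdef, hmid]
  have hdetB : B.det = A.det * C.det := by
    rw [← hmid, det_mul_right_comm, hSS, det_mul]
  have hdetT : (t • A + (1 - t) • B).det
      = A.det * ∏ i, (t + (1 - t) * hCpd.1.eigenvalues i) := by
    rw [hfact, det_mul_right_comm, hSS, det_mul, det_smul_one_add_smul hCpd.1]
  have hCdet : C.det = ∏ i, hCpd.1.eigenvalues i := by
    have := hCpd.1.det_eq_prod_eigenvalues
    simpa using this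
  have heigpos : ∀ i, 0 < hCpd.1.eigenvalues i := hCpd.eigenvalues_pos
  have hterm : ∀ i, (1 - t) * Real.log (hCpd.1.eigenvalues i) ≤
      Real.log (t + (1 - t) * hCpd.1.eigenvalues i) := by
    intro i
    have hmem1 : (1 : ℝ) ∈ Set.Ioi (0:ℝ) := by norm_num
    have hmem2 : hCpd.1.eigenvalues i ∈ Set.Ioi (0:ℝ) := heigpos i
    have hb' : (0:ℝ) ≤ 1 - t := by linarith
    have hab : t + (1 - t) = 1 := by ring
    have := (strictConcaveOn_log_Ioi.concaveOn).2 hmem1 hmem2 h0 hb' hab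
    simpa [smul_eq_mul] using this
  have hposT : ∀ i, 0 < t + (1 - t) * hCpd.1.eigenvalues i := by
    intro i
    rcases lt_or_eq_of_le h1 with h | h
    · have := heigpos i; nlinarith
    · subst h; simpa using one_pos
  have hlogT : Real.log (t • A + (1 - t) • B).det
      = Real.log A.det + ∑ i, Real.log (t + (1 - t) * hCpd.1.eigenvalues i) := by
    rw [hdetT, Real.log_mul hA.det_pos.ne' (Finset.prod_pos (fun i _ => hposT i)).ne',
      Real.log_prod (fun i _ => (hposT i).ne')]
  have hlogB : Real.log B.det
      = Real.log A.det + ∑ i, Real.log (hCpd.1.eigenvalues i) := by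
    rw [hdetB, hCdet, Real.log_mul hA.det_pos.ne'
      (Finset.prod_pos (fun i _ => heigpos i)).ne',
      Real.log_prod (fun i _ => (heigpos i).ne')]
  have hsum : (1 - t) * ∑ i, Real.log (hCpd.1.eigenvalues i) ≤
      ∑ i, Real.log (t + (1 - t) * hCpd.1.eigenvalues i) := by
    rw [Finset.mul_sum]
    exact Finset.sum_le_sum fun i _ => hterm i
  rw [hlogT, hlogB]
  have : t * Real.log A.det + (1 - t) * (Real.log A.det + ∑ i, Real.log (hCpd.1.eigenvalues i))
      = Real.log A.det + (1 - t) * ∑ i, Real.log (hCpd.1.eigenvalues i) := by ring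
  rw [this]
  linarith [hsum]


lemma quad_identity {P M : Matrix n n ℝ} (hP : P.PosDef) (hM : M.PosSemidef)
    (x z : n → ℝ) :
    (x - M *ᵥ z) ⬝ᵥ (P *ᵥ (x - M *ᵥ z)) + z ⬝ᵥ (M *ᵥ z)
      = x ⬝ᵥ ((P⁻¹ + M)⁻¹ *ᵥ x)
        + (z - (P⁻¹ + M)⁻¹ *ᵥ x) ⬝ᵥ ((M * P * M + M) *ᵥ (z - (P⁻¹ + M)⁻¹ *ᵥ x)) := by
  have hApd : (P⁻¹ + M).PosDef := hP.inv.add_posSemidef hM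
  have hPunit : IsUnit P.det := hP.det_pos.ne'.isUnit
  have hPP : P * P⁻¹ = 1 := mul_nonsing_inv _ hPunit
  have hPP' : P⁻¹ * P = 1 := nonsing_inv_mul _ hPunit
  have hPinvH : P⁻¹.IsHermitian := hP.isHermitian.inv
  have hAunit : IsUnit (P⁻¹ + M).det := hApd.det_pos.ne'.isUnit
  set u : n → ℝ := (P⁻¹ + M)⁻¹ *ᵥ x with hudef
  set w : n → ℝ := z - u with hwdef
  have hzw : z = u + w := by rw [hwdef]; abel
  have hxu : (P⁻¹ + M) *ᵥ u = x := by
    rw [hudef, mulVec_mulVec, mul_nonsing_inv _ hAunit, one_mulVec]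
  have hx : x = P⁻¹ *ᵥ u + M *ᵥ u := by rw [← hxu, add_mulVec]
  set a : n → ℝ := P⁻¹ *ᵥ u with hadef
  set b : n → ℝ := M *ᵥ w with hbdef
  have hPa : P *ᵥ a = u := by rw [hadef, mulVec_mulVec, hPP, one_mulVec]
  have hv : x - M *ᵥ z = a - b := by
    rw [hx, hzw, mulVec_add, hbdef]; abel
  have h1 : a ⬝ᵥ (P *ᵥ a) = u ⬝ᵥ a := by rw [hPa, dotProduct_comm]
  have h2 : a ⬝ᵥ (P *ᵥ b) = u ⬝ᵥ b := by
    rw [hadef, dot_shift hPinvH, mulVec_mulVec, hPP', one_mulVec]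
  have h3 : b ⬝ᵥ (P *ᵥ a) = u ⬝ᵥ b := by rw [hPa, dotProduct_comm]
  have h5 : w ⬝ᵥ (M *ᵥ u) = u ⬝ᵥ b := by
    rw [← dot_shift hM.1 w u, ← hbdef, dotProduct_comm]
  have hR : w ⬝ᵥ ((M * P * M) *ᵥ w) = b ⬝ᵥ (P *ᵥ b) := by
    rw [← mulVec_mulVec, ← mulVec_mulVec, ← hbdef, ← dot_shift hM.1, ← hbdef]
  calc (x - M *ᵥ z) ⬝ᵥ (P *ᵥ (x - M *ᵥ z)) + z ⬝ᵥ (M *ᵥ z)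
      = (a - b) ⬝ᵥ (P *ᵥ (a - b)) + (u + w) ⬝ᵥ (M *ᵥ (u + w)) := by rw [hv, ← hzw]
    _ = (a ⬝ᵥ (P *ᵥ a) - a ⬝ᵥ (P *ᵥ b) - b ⬝ᵥ (P *ᵥ a) + b ⬝ᵥ (P *ᵥ b))
        + (u ⬝ᵥ (M *ᵥ u) + u ⬝ᵥ (M *ᵥ w) + (w ⬝ᵥ (M *ᵥ u) + w ⬝ᵥ (M *ᵥ w))) := by
        simp only [mulVec_sub, mulVec_add, dotProduct_sub, sub_dotProduct,
          dotProduct_add, add_dotProduct]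
        ring
    _ = (u ⬝ᵥ a - u ⬝ᵥ b - u ⬝ᵥ b + b ⬝ᵥ (P *ᵥ b))
        + (u ⬝ᵥ (M *ᵥ u) + u ⬝ᵥ b + (u ⬝ᵥ b + w ⬝ᵥ (M *ᵥ w))) := by
        rw [h1, h2, h3, h5]
    _ = (u ⬝ᵥ a + u ⬝ᵥ (M *ᵥ u)) + (b ⬝ᵥ (P *ᵥ b) + w ⬝ᵥ (M *ᵥ w)) := by ring
    _ = x ⬝ᵥ u + w ⬝ᵥ ((M * P * M + M) *ᵥ w) := by
        rw [add_mulVec, dotProduct_add, hR]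
        rw [hx, add_dotProduct, hadef, dotProduct_comm u (P⁻¹ *ᵥ u),
          dotProduct_comm u (M *ᵥ u)]
    _ = x ⬝ᵥ ((P⁻¹ + M)⁻¹ *ᵥ x)
        + (z - (P⁻¹ + M)⁻¹ *ᵥ x) ⬝ᵥ ((M * P * M + M) *ᵥ (z - (P⁻¹ + M)⁻¹ *ᵥ x)) := rfl


lemma remainder_psd {P M : Matrix n n ℝ} (hP : P.PosDef) (hM : M.PosSemidef) :
    (M * P * M + M).PosSemidef := by
  have h := hP.posSemidef.mul_mul_conjTranspose_same M
  rw [hM.1.eq] at h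
  exact h.add hM

lemma quad_ineq {P M : Matrix n n ℝ} (hP : P.PosDef) (hM : M.PosSemidef) (x z : n → ℝ) :
    x ⬝ᵥ ((P⁻¹ + M)⁻¹ *ᵥ x) ≤ (x - M *ᵥ z) ⬝ᵥ (P *ᵥ (x - M *ᵥ z)) + z ⬝ᵥ (M *ᵥ z) := by
  rw [quad_identity hP hM x z]
  have h := (remainder_psd hP hM).dotProduct_mulVec_nonneg (z - (P⁻¹ + M)⁻¹ *ᵥ x)
  simp only [star_trivial] at h
  linarith

lemma quad_eq {P M : Matrix n n ℝ} (hP : P.PosDef) (hM : M.PosSemidef) (x : n → ℝ) :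
    (x - M *ᵥ ((P⁻¹ + M)⁻¹ *ᵥ x)) ⬝ᵥ (P *ᵥ (x - M *ᵥ ((P⁻¹ + M)⁻¹ *ᵥ x)))
      + ((P⁻¹ + M)⁻¹ *ᵥ x) ⬝ᵥ (M *ᵥ ((P⁻¹ + M)⁻¹ *ᵥ x))
      = x ⬝ᵥ ((P⁻¹ + M)⁻¹ *ᵥ x) := by
  rw [quad_identity hP hM x ((P⁻¹ + M)⁻¹ *ᵥ x)]
  simp

lemma posDef_convex_comb {P₁ P₂ : Matrix n n ℝ} (h1 : P₁.PosDef) (h2 : P₂.PosDef)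
    {t : ℝ} (h0 : 0 ≤ t) (ht : t ≤ 1) : (t • P₁ + (1 - t) • P₂).PosDef := by
  rcases eq_or_lt_of_le h0 with h | h
  · rw [← h]; simpa using h2
  · rcases eq_or_lt_of_le ht with h' | h'
    · rw [h']; simpa using h1
    · exact (posDef_smul h1 h).add_posSemidef
        ((posDef_smul h2 (by linarith)).posSemidef)

lemma inv_add_inv_concave {P₁ P₂ M : Matrix n n ℝ} (hM : M.PosSemidef)
    (h1 : P₁.PosDef) (h2 : P₂.PosDef) {t : ℝ} (h0 : 0 ≤ t) (ht : t ≤ 1) :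
    (((t • P₁ + (1 - t) • P₂)⁻¹ + M)⁻¹
      - (t • (P₁⁻¹ + M)⁻¹ + (1 - t) • (P₂⁻¹ + M)⁻¹)).PosSemidef := by
  have hPt : (t • P₁ + (1 - t) • P₂).PosDef := posDef_convex_comb h1 h2 h0 ht
  have hFt : ((t • P₁ + (1 - t) • P₂)⁻¹ + M).PosDef := hPt.inv.add_posSemidef hM
  have hF1 : (P₁⁻¹ + M).PosDef := h1.inv.add_posSemidef hM
  have hF2 : (P₂⁻¹ + M).PosDef := h2.inv.add_posSemidef hM
  refine PosSemidef.of_dotProduct_mulVec_nonneg ?_ ?_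
  · have hsm : ∀ (c : ℝ) (X : Matrix n n ℝ), X.IsHermitian → (c • X).IsHermitian := by
      intro c X hX
      simp [Matrix.IsHermitian, conjTranspose_smul, hX.eq, transpose_eq hX]
    exact (hFt.inv.isHermitian).sub
      (((hsm t _ hF1.inv.isHermitian).add (hsm (1 - t) _ hF2.inv.isHermitian)))
  · intro x
    simp only [star_trivial, sub_mulVec, dotProduct_sub, add_mulVec,
      dotProduct_add, smul_mulVec, dotProduct_smul, smul_eq_mul, sub_nonneg]
    set z : n → ℝ := ((t • P₁ + (1 - t) • P₂)⁻¹ + M)⁻¹ *ᵥ x with hzdef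
    have e := quad_eq hPt hM x
    have i1 := quad_ineq h1 hM x z
    have i2 := quad_ineq h2 hM x z
    have expand : (x - M *ᵥ z) ⬝ᵥ ((t • P₁ + (1 - t) • P₂) *ᵥ (x - M *ᵥ z))
        = t * ((x - M *ᵥ z) ⬝ᵥ (P₁ *ᵥ (x - M *ᵥ z)))
          + (1 - t) * ((x - M *ᵥ z) ⬝ᵥ (P₂ *ᵥ (x - M *ᵥ z))) := by
      simp [add_mulVec, smul_mulVec, dotProduct_add, dotProduct_smul]
    rw [← hzdef] at e
    have key : x ⬝ᵥ z
        = t * ((x - M *ᵥ z) ⬝ᵥ (P₁ *ᵥ (x - M *ᵥ z)) + z ⬝ᵥ (M *ᵥ z))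
          + (1 - t) * ((x - M *ᵥ z) ⬝ᵥ (P₂ *ᵥ (x - M *ᵥ z)) + z ⬝ᵥ (M *ᵥ z)) := by
      rw [← e, expand]; ring
    have j1 := mul_le_mul_of_nonneg_left i1 h0
    have j2 := mul_le_mul_of_nonneg_left i2 (by linarith : (0:ℝ) ≤ 1 - t)
    linarith

end StmtAux

open StmtAux in
/-- For a positive semidefinite `M`, the map `P ↦ log det (P⁻¹ + M)` is convex on the
cone of positive definite matrices. -/
theorem stmt_6 {p : ℕ} (M : Matrix (Fin p) (Fin p) ℝ) (hM : M.PosSemidef) :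
    ∀ (P₁ P₂ : Matrix (Fin p) (Fin p) ℝ), P₁.PosDef → P₂.PosDef →
      ∀ t : ℝ, 0 ≤ t → t ≤ 1 →
        Real.log ((t • P₁ + (1 - t) • P₂)⁻¹ + M).det ≤
          t * Real.log (P₁⁻¹ + M).det + (1 - t) * Real.log (P₂⁻¹ + M).det := by
  intro P₁ P₂ h1 h2 t h0 ht
  rcases eq_or_lt_of_le h0 with h | hpos
  · rw [← h]; norm_num
  rcases eq_or_lt_of_le ht with h | hlt
  · rw [h]; norm_num
  have hPt : (t • P₁ + (1 - t) • P₂).PosDef := posDef_convex_comb h1 h2 h0 ht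
  have hFt : ((t • P₁ + (1 - t) • P₂)⁻¹ + M).PosDef := hPt.inv.add_posSemidef hM
  have hF1 : (P₁⁻¹ + M).PosDef := h1.inv.add_posSemidef hM
  have hF2 : (P₂⁻¹ + M).PosDef := h2.inv.add_posSemidef hM
  have hS : (t • (P₁⁻¹ + M)⁻¹ + (1 - t) • (P₂⁻¹ + M)⁻¹).PosDef :=
    (posDef_smul hF1.inv hpos).add (posDef_smul hF2.inv (by linarith))
  have hsub := inv_add_inv_concave hM h1 h2 h0 ht
  have hdet : (t • (P₁⁻¹ + M)⁻¹ + (1 - t) • (P₂⁻¹ + M)⁻¹).det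
      ≤ (((t • P₁ + (1 - t) • P₂)⁻¹ + M)⁻¹).det :=
    det_le_det_of_sub_posSemidef hS hsub
  have hlog1 : Real.log (t • (P₁⁻¹ + M)⁻¹ + (1 - t) • (P₂⁻¹ + M)⁻¹).det
      ≤ Real.log (((t • P₁ + (1 - t) • P₂)⁻¹ + M)⁻¹).det :=
    Real.log_le_log hS.det_pos hdet
  have hlog2 := log_det_concave hF1.inv hF2.inv h0 ht
  have inv1 : Real.log ((P₁⁻¹ + M)⁻¹).det = - Real.log (P₁⁻¹ + M).det := by
    rw [det_nonsing_inv, Ring.inverse_eq_inv, Real.log_inv]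
  have inv2 : Real.log ((P₂⁻¹ + M)⁻¹).det = - Real.log (P₂⁻¹ + M).det := by
    rw [det_nonsing_inv, Ring.inverse_eq_inv, Real.log_inv]
  have invT : Real.log (((t • P₁ + (1 - t) • P₂)⁻¹ + M)⁻¹).det
      = - Real.log ((t • P₁ + (1 - t) • P₂)⁻¹ + M).det := by
    rw [det_nonsing_inv, Ring.inverse_eq_inv, Real.log_inv]
  rw [inv1, inv2] at hlog2
  rw [invT] at hlog1
  linarith
end

section
/- Let A be a p×p real matrix, Σ a p×p real positive definite matrix, and let P₀, P₁, …, P_n be p×p real positive definite matrices. Set P̄ = (1/(n+1))·∑_{t=0}^{n} P_t. Then (1/(n+1))·∑_{t=0}^{n} [ (1/2)·log det(A·P_t·Aᵀ + Σ) − (1/2)·log det P_t ] ≥ (1/2)·log det(A·P̄·Aᵀ + Σ) − (1/2)·log det P̄. -/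
open Matrix Finset

namespace Stmt7Helpers

variable {p : ℕ}

private lemma trace_nonneg {M : Matrix (Fin p) (Fin p) ℝ} (hM : M.PosSemidef) : 0 ≤ M.trace := by
  rw [Matrix.trace]
  refine Finset.sum_nonneg fun i _ => ?_
  have h := hM.dotProduct_mulVec_nonneg (Pi.single i 1)
  simpa [dotProduct, Matrix.mulVec, Pi.single_apply, Finset.mul_sum] using h

open scoped MatrixOrder in
private lemma exists_sqrt' {B : Matrix (Fin p) (Fin p) ℝ} (hB : B.PosSemidef) :
    ∃ S : Matrix (Fin p) (Fin p) ℝ, S.PosSemidef ∧ S * S = B :=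
  ⟨CFC.sqrt B, (CFC.sqrt_nonneg B).posSemidef, CFC.sqrt_mul_sqrt_self B hB.nonneg⟩

private lemma trace_mul_psd_nonneg {A B : Matrix (Fin p) (Fin p) ℝ} (hA : A.PosSemidef)
    (hB : B.PosSemidef) : 0 ≤ (A * B).trace := by
  obtain ⟨S, hs, hmul⟩ := exists_sqrt' hB
  have h1 : (S * A * S).trace = (A * B).trace := by
    rw [Matrix.trace_mul_cycle, hmul, Matrix.trace_mul_comm]
  have h2 : (Sᴴ * A * S).PosSemidef := hA.conjTranspose_mul_mul_same _
  rw [hs.isHermitian.eq] at h2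
  rw [← h1]
  exact trace_nonneg h2

private lemma trace_eq_sum_eigen {C : Matrix (Fin p) (Fin p) ℝ} (hH : C.IsHermitian) :
    C.trace = ∑ i, hH.eigenvalues i := by
  simpa using hH.trace_eq_sum_eigenvalues

private lemma det_eq_prod_eigen {C : Matrix (Fin p) (Fin p) ℝ} (hH : C.IsHermitian) :
    C.det = ∏ i, hH.eigenvalues i := by
  simpa using hH.det_eq_prod_eigenvalues

private lemma log_det_le {C : Matrix (Fin p) (Fin p) ℝ} (hC : C.PosDef) :
    Real.log C.det ≤ C.trace - p := by
  have hH := hC.isHermitian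
  rw [det_eq_prod_eigen hH, trace_eq_sum_eigen hH]
  rw [Real.log_prod (fun i _ => (hC.eigenvalues_pos i).ne')]
  have hb : ∀ i ∈ Finset.univ (α := Fin p),
      Real.log (hH.eigenvalues i) ≤ hH.eigenvalues i - 1 :=
    fun i _ => Real.log_le_sub_one_of_pos (hC.eigenvalues_pos i)
  calc ∑ i, Real.log (hH.eigenvalues i) ≤ ∑ i, (hH.eigenvalues i - 1) :=
        Finset.sum_le_sum hb
    _ = (∑ i, hH.eigenvalues i) - p := by
        rw [Finset.sum_sub_distrib]
        simp

private lemma posDef_conj {M B : Matrix (Fin p) (Fin p) ℝ} (hM : M.PosDef)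
    (hB : IsUnit B) : (Bᴴ * M * B).PosDef := by
  simpa [star_eq_conjTranspose] using (Matrix.IsUnit.posDef_star_left_conjugate_iff hB).2 hM

private lemma logdet_sub_le {Y N : Matrix (Fin p) (Fin p) ℝ} (hY : Y.PosDef) (hN : N.PosDef) :
    Real.log N.det - Real.log Y.det ≤ (Y⁻¹ * N).trace - p := by
  obtain ⟨S, hSs, hSS⟩ := exists_sqrt' hN.posSemidef
  have hdetS : S.det * S.det = N.det := by rw [← Matrix.det_mul, hSS]
  have hdetSne : S.det ≠ 0 := by
    intro h
    rw [h, mul_zero] at hdetS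
    exact hN.det_pos.ne' hdetS.symm
  have hSunit : IsUnit S := (Matrix.isUnit_iff_isUnit_det S).2 hdetSne.isUnit
  have hC : (Sᴴ * Y⁻¹ * S).PosDef := posDef_conj hY.inv hSunit
  have hSH : Sᴴ = S := hSs.isHermitian.eq
  rw [hSH] at hC
  have hdetYi : Y⁻¹.det = Y.det⁻¹ := by
    rw [Matrix.det_nonsing_inv, Ring.inverse_eq_inv']
  have hdetC : (S * Y⁻¹ * S).det = N.det / Y.det := by
    rw [Matrix.det_mul, Matrix.det_mul, hdetYi]
    rw [← hdetS]
    field_simp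
  have htrC : (S * Y⁻¹ * S).trace = (Y⁻¹ * N).trace := by
    rw [Matrix.trace_mul_cycle, hSS, Matrix.trace_mul_comm]
  have h := log_det_le hC
  rw [hdetC, htrC, Real.log_div hN.det_pos.ne' hY.det_pos.ne'] at h
  exact h

private lemma key {M Q R : Matrix (Fin p) (Fin p) ℝ} (hM : M.PosSemidef) (hQ : Q.PosDef)
    (hR : R.PosDef) :
    Real.log (M + R⁻¹).det + ((M + R⁻¹)⁻¹ * (R⁻¹ - R⁻¹ * Q * R⁻¹)).trace
      ≤ Real.log (M + Q⁻¹).det := by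
  set Y := M + Q⁻¹ with hYdef
  set N := M + R⁻¹ with hNdef
  set D := Y - N with hDdef
  have hYpd : Y.PosDef := Matrix.PosDef.posSemidef_add hM hQ.inv
  have hNpd : N.PosDef := Matrix.PosDef.posSemidef_add hM hR.inv
  have hQ1 : Q * Q⁻¹ = 1 := Matrix.mul_nonsing_inv Q hQ.det_pos.ne'.isUnit
  have hQ2 : Q⁻¹ * Q = 1 := Matrix.nonsing_inv_mul Q hQ.det_pos.ne'.isUnit
  have hY1 : Y * Y⁻¹ = 1 := Matrix.mul_nonsing_inv Y hYpd.det_pos.ne'.isUnit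
  have hY2 : Y⁻¹ * Y = 1 := Matrix.nonsing_inv_mul Y hYpd.det_pos.ne'.isUnit
  have hN2 : N⁻¹ * N = 1 := Matrix.nonsing_inv_mul N hNpd.det_pos.ne'.isUnit
  have hYQ : Y * Q = M * Q + 1 := by
    rw [hYdef, add_mul, hQ2]
  have hD : D = Q⁻¹ - R⁻¹ := by
    rw [hDdef, hYdef, hNdef]; abel
  have e1 : Y⁻¹ * D = 1 - Y⁻¹ * N := by
    rw [hDdef, mul_sub, hY2]
  have e2 : R⁻¹ * Q * D = R⁻¹ - R⁻¹ * Q * R⁻¹ := by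
    rw [hD, mul_sub, mul_assoc, hQ1, mul_one]
  have e3' : D * (Q - Y⁻¹) = N * Y⁻¹ - R⁻¹ * Q := by
    have hNQ : N * Q = M * Q + R⁻¹ * Q := by rw [hNdef, add_mul]
    rw [hDdef, sub_mul, mul_sub, mul_sub, hYQ, hY1, hNQ]
    noncomm_ring
  have e3 : N⁻¹ * D * (Q - Y⁻¹) = Y⁻¹ - N⁻¹ * (R⁻¹ * Q) := by
    rw [mul_assoc, e3', mul_sub, ← mul_assoc, hN2, one_mul]
  have full : N⁻¹ * D * (Q - Y⁻¹) * D = 1 - Y⁻¹ * N - N⁻¹ * (R⁻¹ - R⁻¹ * Q * R⁻¹) := by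
    rw [e3, sub_mul, e1, ← e2]
    noncomm_ring
  have htG : (N⁻¹ * D * (Q - Y⁻¹) * D).trace = ((D * N⁻¹ * D) * (Q - Y⁻¹)).trace := by
    rw [Matrix.trace_mul_comm]
    congr 1
    noncomm_ring
  have hDH : Dᴴ = D := by
    rw [hD, conjTranspose_sub, hQ.inv.isHermitian.eq, hR.inv.isHermitian.eq]
  have psd2 : (D * N⁻¹ * D).PosSemidef := by
    have := hNpd.inv.posSemidef.conjTranspose_mul_mul_same D
    rwa [hDH] at this
  have psd1 : (Q - Y⁻¹).PosSemidef := by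
    have hMQ : Q - Y⁻¹ = Y⁻¹ * (M * Q) := by
      have h0 : Y⁻¹ * (Y * Q) = Q := by rw [← mul_assoc, hY2, one_mul]
      rw [hYQ, mul_add, mul_one] at h0
      linear_combination (norm := noncomm_ring) -h0
    have hMQY : M * Q * Y = M * Q * M + M := by
      rw [hYdef, mul_add, mul_assoc M Q Q⁻¹, hQ1, mul_one]
    have q1 : Q - Y⁻¹ = Y⁻¹ * (M * Q * M + M) * Y⁻¹ := by
      rw [← hMQY, hMQ]
      rw [mul_assoc, mul_assoc, mul_assoc, hY1, mul_one]
    have hMH : Mᴴ = M := hM.isHermitian.eq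
    have hinner : (M * Q * M + M).PosSemidef := by
      have h1 := hQ.posSemidef.conjTranspose_mul_mul_same M
      rw [hMH] at h1
      exact h1.add hM
    have houter := hinner.conjTranspose_mul_mul_same Y⁻¹
    rw [hYpd.inv.isHermitian.eq] at houter
    rw [q1]
    exact houter
  have hT : 0 ≤ ((D * N⁻¹ * D) * (Q - Y⁻¹)).trace := trace_mul_psd_nonneg psd2 psd1
  have hL1 := logdet_sub_le hYpd hNpd
  have htrace_full : ((D * N⁻¹ * D) * (Q - Y⁻¹)).trace
      = (p : ℝ) - (Y⁻¹ * N).trace - (N⁻¹ * (R⁻¹ - R⁻¹ * Q * R⁻¹)).trace := by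
    rw [← htG, full, Matrix.trace_sub, Matrix.trace_sub, Matrix.trace_one]
    simp
  linarith [htrace_full ▸ hT]

private lemma posDef_smul {S : Matrix (Fin p) (Fin p) ℝ} {c : ℝ} (hc : 0 < c)
    (hS : S.PosDef) : (c • S).PosDef := by
  refine ⟨?_, fun x hx => ?_⟩
  · have := hS.isHermitian
    unfold Matrix.IsHermitian at *
    rw [conjTranspose_smul, this]
    simp
  · exact (hS.smul hc).2 hx

private lemma posDef_sum_range (P : ℕ → Matrix (Fin p) (Fin p) ℝ) :
    ∀ m : ℕ, (∀ t ≤ m, (P t).PosDef) → (∑ t ∈ Finset.range (m + 1), P t).PosDef := by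
  intro m
  induction m with
  | zero => intro h; simpa using h 0 le_rfl
  | succ k ih =>
      intro h
      rw [Finset.sum_range_succ]
      exact (ih (fun t ht => h t (ht.trans (Nat.le_succ k)))).add (h (k+1) le_rfl)

private lemma detid {A Sw W : Matrix (Fin p) (Fin p) ℝ} (hSw : Sw.PosDef) (hW : W.PosDef) :
    (A * W * Aᵀ + Sw).det = Sw.det * (W.det * ((Aᵀ * Sw⁻¹ * A) + W⁻¹).det) := by
  have hW2 : W⁻¹ * W = 1 := Matrix.nonsing_inv_mul W hW.det_pos.ne'.isUnit
  have hSw1 : Sw * Sw⁻¹ = 1 := Matrix.mul_nonsing_inv Sw hSw.det_pos.ne'.isUnit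
  have h1 : ((Aᵀ * Sw⁻¹ * A) + W⁻¹) * W = 1 + Aᵀ * (Sw⁻¹ * A * W) := by
    rw [add_mul, hW2]
    noncomm_ring
  have h2 : W.det * ((Aᵀ * Sw⁻¹ * A) + W⁻¹).det = (1 + Aᵀ * (Sw⁻¹ * A * W)).det := by
    rw [← h1, Matrix.det_mul, mul_comm]
  have h3 : (1 + Aᵀ * (Sw⁻¹ * A * W)).det = (1 + Sw⁻¹ * A * W * Aᵀ).det := by
    rw [Matrix.det_one_add_mul_comm]
  have h4 : Sw * (1 + Sw⁻¹ * A * W * Aᵀ) = A * W * Aᵀ + Sw := by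
    rw [mul_add, mul_one]
    rw [← mul_assoc, ← mul_assoc, ← mul_assoc, hSw1, one_mul]
    abel
  rw [h2, h3, ← Matrix.det_mul Sw, h4]

end Stmt7Helpers

open Stmt7Helpers in
/-- Jensen-type inequality: the average of `(1/2)·log det(A·P_t·Aᵀ + Sw) − (1/2)·log det P_t`
over `t = 0, …, n` is at least the same expression evaluated at the average
`P̄ = (1/(n+1))·∑ P_t`, for positive definite `P_t` and `Sw`. -/
theorem stmt_7 {p : ℕ} (n : ℕ) (A Sw : Matrix (Fin p) (Fin p) ℝ) (hSw : Sw.PosDef)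
    (P : ℕ → Matrix (Fin p) (Fin p) ℝ) (hP : ∀ t ≤ n, (P t).PosDef)
    (Pbar : Matrix (Fin p) (Fin p) ℝ)
    (hPbar : Pbar = ((n : ℝ) + 1)⁻¹ • ∑ t ∈ Finset.range (n + 1), P t) :
    ((n : ℝ) + 1)⁻¹ *
        ∑ t ∈ Finset.range (n + 1),
          ((1 / 2) * Real.log (A * P t * Aᵀ + Sw).det - (1 / 2) * Real.log (P t).det) ≥
      (1 / 2) * Real.log (A * Pbar * Aᵀ + Sw).det - (1 / 2) * Real.log Pbar.det := by
  have hc : (0 : ℝ) < (n : ℝ) + 1 := by positivity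
  -- Pbar is positive definite
  have hSum : (∑ t ∈ Finset.range (n + 1), P t).PosDef := posDef_sum_range P n hP
  have hR : Pbar.PosDef := hPbar ▸ posDef_smul (by positivity) hSum
  -- M := Aᵀ Sw⁻¹ A is PSD
  set M : Matrix (Fin p) (Fin p) ℝ := Aᵀ * Sw⁻¹ * A with hMdef
  have hM : M.PosSemidef := by
    have h := hSw.inv.posSemidef.conjTranspose_mul_mul_same A
    rwa [conjTranspose_eq_transpose_of_trivial] at h
  set N : Matrix (Fin p) (Fin p) ℝ := M + Pbar⁻¹ with hNdef
  have hNpd : N.PosDef := Matrix.PosDef.posSemidef_add hM hR.inv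
  -- sum of the P t equals (n+1) • Pbar
  have hsum : ∑ t ∈ Finset.range (n + 1), P t = ((n : ℝ) + 1) • Pbar := by
    rw [hPbar, smul_smul, mul_inv_cancel₀ hc.ne', one_smul]
  -- the trace correction terms sum to zero
  have hzero : ∑ t ∈ Finset.range (n + 1),
      (Pbar⁻¹ - Pbar⁻¹ * P t * Pbar⁻¹) = 0 := by
    have hR2 : Pbar⁻¹ * Pbar = 1 := Matrix.nonsing_inv_mul Pbar hR.det_pos.ne'.isUnit
    rw [Finset.sum_sub_distrib, Finset.sum_const, Finset.card_range]
    have h2 : ∑ t ∈ Finset.range (n + 1), Pbar⁻¹ * P t * Pbar⁻¹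
        = Pbar⁻¹ * (∑ t ∈ Finset.range (n + 1), P t) * Pbar⁻¹ := by
      rw [Finset.mul_sum, Finset.sum_mul]
    rw [h2, hsum, mul_smul_comm, smul_mul_assoc, hR2, one_mul, ← Nat.cast_smul_eq_nsmul ℝ]
    push_cast
    rw [sub_self]
  -- per-t key inequality
  have hkey : ∀ t ∈ Finset.range (n + 1),
      Real.log N.det + (N⁻¹ * (Pbar⁻¹ - Pbar⁻¹ * P t * Pbar⁻¹)).trace
        ≤ Real.log (M + (P t)⁻¹).det :=
    fun t ht => key hM (hP t (Nat.lt_succ_iff.mp (Finset.mem_range.mp ht))) hR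
  have hsum_ineq : ((n : ℝ) + 1) * Real.log N.det
      ≤ ∑ t ∈ Finset.range (n + 1), Real.log (M + (P t)⁻¹).det := by
    have h := Finset.sum_le_sum hkey
    rw [Finset.sum_add_distrib, Finset.sum_const, Finset.card_range] at h
    have htr : ∑ t ∈ Finset.range (n + 1),
        (N⁻¹ * (Pbar⁻¹ - Pbar⁻¹ * P t * Pbar⁻¹)).trace = 0 := by
      rw [← Matrix.trace_sum, ← Finset.mul_sum, hzero, mul_zero, Matrix.trace_zero]
    rw [htr, add_zero, nsmul_eq_mul] at h
    push_cast at h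
    exact h
  -- rewriting each summand via the determinant identity
  have hterm : ∀ W : Matrix (Fin p) (Fin p) ℝ, W.PosDef →
      (1 / 2) * Real.log (A * W * Aᵀ + Sw).det - (1 / 2) * Real.log W.det
        = (1 / 2) * (Real.log Sw.det + Real.log (M + W⁻¹).det) := by
    intro W hW
    have hdp : (0 : ℝ) < (M + W⁻¹).det := (Matrix.PosDef.posSemidef_add hM hW.inv).det_pos
    rw [detid hSw hW, ← hMdef]
    rw [Real.log_mul hSw.det_pos.ne' (mul_pos hW.det_pos hdp).ne', Real.log_mul hW.det_pos.ne' hdp.ne']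
    ring
  have hLHS : ∑ t ∈ Finset.range (n + 1),
      ((1 / 2) * Real.log (A * P t * Aᵀ + Sw).det - (1 / 2) * Real.log (P t).det)
      = (1 / 2) * (((n : ℝ) + 1) * Real.log Sw.det
          + ∑ t ∈ Finset.range (n + 1), Real.log (M + (P t)⁻¹).det) := by
    rw [Finset.sum_congr rfl
      (fun t ht => hterm (P t) (hP t (Nat.lt_succ_iff.mp (Finset.mem_range.mp ht))))]
    rw [← Finset.mul_sum, Finset.sum_add_distrib, Finset.sum_const, Finset.card_range,
      nsmul_eq_mul]
    push_cast
    ring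
  have hRHS : (1 / 2) * Real.log (A * Pbar * Aᵀ + Sw).det - (1 / 2) * Real.log Pbar.det
      = (1 / 2) * (Real.log Sw.det + Real.log N.det) := hterm Pbar hR
  rw [ge_iff_le, hRHS, hLHS, inv_mul_eq_div, le_div_iff₀ hc]
  nlinarith [hsum_ineq]
end

section
/- Let A be a p×p real matrix, Σ a p×p real positive semidefinite matrix, and let P₀, P₁, …, P_n be p×p real positive semidefinite matrices satisfying P_t ⪯ A·P_{t−1}·Aᵀ + Σ for every t = 1, …, n. Set P̄ = (1/(n+1))·∑_{t=0}^{n} P_t. Then P̄ ⪯ A·P̄·Aᵀ + Σ + (1/(n+1))·P₀. -/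
open Matrix Finset

lemma psd_smul {p : ℕ} {M : Matrix (Fin p) (Fin p) ℝ} (hM : M.PosSemidef) {c : ℝ}
    (hc : 0 ≤ c) : (c • M).PosSemidef := by
  refine ⟨by show (c • M)ᴴ = c • M; rw [conjTranspose_smul, hM.1.eq, star_trivial], fun x => ?_⟩
  exact (hM.smul hc).2 x

lemma psd_sum {p : ℕ} {s : Finset ℕ} {f : ℕ → Matrix (Fin p) (Fin p) ℝ}
    (h : ∀ i ∈ s, (f i).PosSemidef) : (∑ i ∈ s, f i).PosSemidef := by
  classical
  induction s using Finset.induction_on with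
  | empty => simpa using Matrix.PosSemidef.zero
  | insert a s hx ih =>
    rw [Finset.sum_insert hx]
    exact (h _ (Finset.mem_insert_self _ _)).add
      (ih fun i hi => h i (Finset.mem_insert_of_mem hi))

/-- If `P_t ⪯ A·P_{t−1}·Aᵀ + Σ` for `t = 1, …, n`, then the average
`P̄ = (1/(n+1))·∑ P_t` satisfies `P̄ ⪯ A·P̄·Aᵀ + Σ + (1/(n+1))·P₀`. -/
theorem stmt_8 {p : ℕ} (n : ℕ) (A Sw : Matrix (Fin p) (Fin p) ℝ) (hSw : Sw.PosSemidef)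
    (P : ℕ → Matrix (Fin p) (Fin p) ℝ) (hP : ∀ t ≤ n, (P t).PosSemidef)
    (hrec : ∀ t, 1 ≤ t → t ≤ n → (A * P (t - 1) * Aᵀ + Sw - P t).PosSemidef)
    (Pbar : Matrix (Fin p) (Fin p) ℝ)
    (hPbar : Pbar = ((n : ℝ) + 1)⁻¹ • ∑ t ∈ Finset.range (n + 1), P t) :
    (A * Pbar * Aᵀ + Sw + ((n : ℝ) + 1)⁻¹ • P 0 - Pbar).PosSemidef := by
  have hc : (0:ℝ) ≤ ((n : ℝ) + 1)⁻¹ := by positivity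
  have hAT : Aᵀ = Aᴴ := (conjTranspose_eq_transpose_of_trivial A).symm
  set S : Matrix (Fin p) (Fin p) ℝ :=
    (∑ t ∈ Finset.range n, (A * P t * Aᵀ + Sw - P (t + 1))) + (A * P n * Aᵀ + Sw) with hS
  have hSpsd : S.PosSemidef := by
    refine (psd_sum fun i hi => ?_).add ?_
    · have := hrec (i + 1) (Nat.le_add_left 1 i) (Finset.mem_range.mp hi)
      simpa using this
    · refine Matrix.PosSemidef.add ?_ hSw
      rw [hAT]
      exact (hP n le_rfl).mul_mul_conjTranspose_same A
  have key : A * Pbar * Aᵀ + Sw + ((n : ℝ) + 1)⁻¹ • P 0 - Pbar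
      = ((n : ℝ) + 1)⁻¹ • S := by
    subst hPbar
    rw [hS]
    have hne : ((n : ℝ) + 1) ≠ 0 := by positivity
    rw [Matrix.mul_smul, Matrix.smul_mul, Matrix.mul_sum, Matrix.sum_mul]
    simp only [Finset.sum_add_distrib, Finset.sum_sub_distrib, Finset.sum_const,
      Finset.card_range, smul_add, smul_sub, Finset.smul_sum,
      Finset.sum_range_succ' (fun t => P t), Finset.sum_range_succ (fun t => A * P t * Aᵀ)]
    match_scalars <;> field_simp <;> ring
  rw [key]
  exact psd_smul hSpsd hc
end

section
/- Let A be a p×p real matrix (p ≥ 1), Σ a p×p real positive semidefinite matrix, D > 0 a real number, and P a p×p real positive semidefinite matrix with trace(P) ≤ D. Then det(A·P·Aᵀ + Σ) ≤ ( (λ_max(A·Aᵀ)·D + trace(Σ)) / p )^p, where λ_max(A·Aᵀ) denotes the largest eigenvalue of A·Aᵀ. -/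
open Matrix

/-- The largest eigenvalue of a Hermitian real matrix. -/
noncomputable def eigMax {p : ℕ} (M : Matrix (Fin p) (Fin p) ℝ) (hM : M.IsHermitian) : ℝ :=
  ⨆ i, hM.eigenvalues i

lemma isHermitian_mul_transpose_self_real {p : ℕ} (A : Matrix (Fin p) (Fin p) ℝ) :
    (A * Aᵀ).IsHermitian := by
  rw [← conjTranspose_eq_transpose_of_trivial]
  exact isHermitian_mul_conjTranspose_self A

lemma my_eig_le_eigMax {p : ℕ} {M : Matrix (Fin p) (Fin p) ℝ} (hM : M.IsHermitian) (i : Fin p) :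
    hM.eigenvalues i ≤ eigMax M hM :=
  le_ciSup (Set.Finite.bddAbove (Set.finite_range _)) i

lemma my_trace_eq_sum_eig {p : ℕ} {M : Matrix (Fin p) (Fin p) ℝ} (hM : M.IsHermitian) :
    M.trace = ∑ i, hM.eigenvalues i := by
  have h1 : star (hM.eigenvectorUnitary : Matrix (Fin p) (Fin p) ℝ) *
      (hM.eigenvectorUnitary : Matrix (Fin p) (Fin p) ℝ) = 1 :=
    mem_unitaryGroup_iff'.mp hM.eigenvectorUnitary.2
  conv_lhs => rw [hM.spectral_theorem, Unitary.conjStarAlgAut_apply]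
  rw [trace_mul_cycle, h1, one_mul, trace_diagonal]
  simp

lemma my_rayleigh {p : ℕ} {M : Matrix (Fin p) (Fin p) ℝ} (hM : M.IsHermitian) (x : Fin p → ℝ) :
    x ⬝ᵥ (M *ᵥ x) ≤ eigMax M hM * (x ⬝ᵥ x) := by
  set U : Matrix (Fin p) (Fin p) ℝ := (hM.eigenvectorUnitary : Matrix (Fin p) (Fin p) ℝ) with hU
  have h1 : U * star U = 1 := mem_unitaryGroup_iff.mp hM.eigenvectorUnitary.2
  have hsU : star U = Uᵀ := by
    rw [star_eq_conjTranspose, conjTranspose_eq_transpose_of_trivial]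
  set y : Fin p → ℝ := star U *ᵥ x with hy
  have hxU : x ᵥ* U = y := by rw [hy, hsU, mulVec_transpose]
  have key : ∀ N : Matrix (Fin p) (Fin p) ℝ, x ⬝ᵥ ((U * N * star U) *ᵥ x) = y ⬝ᵥ (N *ᵥ y) := by
    intro N
    rw [mul_assoc, ← mulVec_mulVec, dotProduct_mulVec, hxU, ← mulVec_mulVec]
  have h2 : x ⬝ᵥ (M *ᵥ x) = ∑ i, hM.eigenvalues i * (y i * y i) := by
    conv_lhs => rw [hM.spectral_theorem, Unitary.conjStarAlgAut_apply]
    rw [← hU, key, dotProduct]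
    refine Finset.sum_congr rfl fun i _ => ?_
    simp [mulVec_diagonal]
    ring
  have h3 : x ⬝ᵥ x = ∑ i, y i * y i := by
    have : y ⬝ᵥ (1 *ᵥ y) = x ⬝ᵥ ((U * 1 * star U) *ᵥ x) := (key 1).symm
    rw [mul_one, h1] at this
    simpa [dotProduct] using this.symm
  rw [h2, h3, Finset.mul_sum]
  refine Finset.sum_le_sum fun i _ => ?_
  exact mul_le_mul_of_nonneg_right (my_eig_le_eigMax hM i) (mul_self_nonneg _)

lemma posSemidef_iff_eq_transpose_mul_self {p : ℕ} {M : Matrix (Fin p) (Fin p) ℝ} :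
    M.PosSemidef ↔ ∃ B : Matrix (Fin p) (Fin p) ℝ, M = Bᴴ * B := by
  refine ⟨fun hM => ?_, fun ⟨B, hB⟩ => hB ▸ posSemidef_conjTranspose_mul_self B⟩
  open scoped MatrixOrder in
  obtain ⟨B, hB⟩ := CStarAlgebra.nonneg_iff_eq_star_mul_self.mp hM.nonneg
  exact ⟨B, hB⟩

lemma my_trace_nonneg {p : ℕ} {M : Matrix (Fin p) (Fin p) ℝ} (hM : M.PosSemidef) :
    0 ≤ M.trace := by
  obtain ⟨B, rfl⟩ := posSemidef_iff_eq_transpose_mul_self.mp hM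
  rw [trace]
  refine Finset.sum_nonneg fun i _ => ?_
  simp only [diag_apply, mul_apply, conjTranspose_apply, star_trivial]
  exact Finset.sum_nonneg fun j _ => mul_self_nonneg _

lemma my_eigMax_nonneg {p : ℕ} (hp : 1 ≤ p) (A : Matrix (Fin p) (Fin p) ℝ)
    (h : (A * Aᵀ).IsHermitian) : 0 ≤ eigMax (A * Aᵀ) h := by
  have hps : (A * Aᵀ).PosSemidef := by
    refine posSemidef_iff_eq_transpose_mul_self.mpr ⟨Aᵀ, ?_⟩
    rw [conjTranspose_eq_transpose_of_trivial, transpose_transpose]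
  have : Nonempty (Fin p) := ⟨⟨0, hp⟩⟩
  exact le_trans (hps.eigenvalues_nonneg (Classical.arbitrary _))
    (my_eig_le_eigMax _ _)

/-- `‖A x‖² ≤ λmax(A Aᵀ) ‖x‖²` via Cauchy–Schwarz. -/
lemma my_op_bound {p : ℕ} (A : Matrix (Fin p) (Fin p) ℝ)
    (h : (A * Aᵀ).IsHermitian) (hl : 0 ≤ eigMax (A * Aᵀ) h) (x : Fin p → ℝ) :
    x ⬝ᵥ ((Aᵀ * A) *ᵥ x) ≤ eigMax (A * Aᵀ) h * (x ⬝ᵥ x) := by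
  set l := eigMax (A * Aᵀ) h
  set y := A *ᵥ x with hy
  have hxx : 0 ≤ x ⬝ᵥ x := Finset.sum_nonneg fun i _ => mul_self_nonneg (x i)
  have hyy : 0 ≤ y ⬝ᵥ y := Finset.sum_nonneg fun i _ => mul_self_nonneg (y i)
  have e1 : x ⬝ᵥ ((Aᵀ * A) *ᵥ x) = y ⬝ᵥ y := by
    rw [← mulVec_mulVec, dotProduct_mulVec, ← mulVec_transpose, transpose_transpose, hy]
  rw [e1]
  have e2 : y ⬝ᵥ y = x ⬝ᵥ (Aᵀ *ᵥ y) := by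
    rw [hy, dotProduct_mulVec, ← mulVec_transpose, dotProduct_comm]
  have cs : (y ⬝ᵥ y) ^ 2 ≤ (x ⬝ᵥ x) * ((Aᵀ *ᵥ y) ⬝ᵥ (Aᵀ *ᵥ y)) := by
    rw [e2]
    simpa [dotProduct, sq] using
      Finset.sum_mul_sq_le_sq_mul_sq Finset.univ x (Aᵀ *ᵥ y)
  have e3 : (Aᵀ *ᵥ y) ⬝ᵥ (Aᵀ *ᵥ y) = y ⬝ᵥ ((A * Aᵀ) *ᵥ y) := by
    rw [← mulVec_mulVec, dotProduct_mulVec, ← mulVec_transpose, transpose_transpose,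
      dotProduct_comm]
  have rb : y ⬝ᵥ ((A * Aᵀ) *ᵥ y) ≤ l * (y ⬝ᵥ y) := my_rayleigh h y
  rcases eq_or_lt_of_le hyy with h0 | h0
  · rw [← h0]
    exact mul_nonneg hl hxx
  · have key : (y ⬝ᵥ y) * (y ⬝ᵥ y) ≤ (l * (x ⬝ᵥ x)) * (y ⬝ᵥ y) := by
      calc (y ⬝ᵥ y) * (y ⬝ᵥ y) = (y ⬝ᵥ y) ^ 2 := (sq _).symm
        _ ≤ (x ⬝ᵥ x) * ((Aᵀ *ᵥ y) ⬝ᵥ (Aᵀ *ᵥ y)) := cs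
        _ = (x ⬝ᵥ x) * (y ⬝ᵥ ((A * Aᵀ) *ᵥ y)) := by rw [e3]
        _ ≤ (x ⬝ᵥ x) * (l * (y ⬝ᵥ y)) := mul_le_mul_of_nonneg_left rb hxx
        _ = (l * (x ⬝ᵥ x)) * (y ⬝ᵥ y) := by ring
    exact le_of_mul_le_mul_right key h0

lemma my_AtA_herm {p : ℕ} (A : Matrix (Fin p) (Fin p) ℝ) : (Aᵀ * A).IsHermitian := by
  have := isHermitian_conjTranspose_mul_self A
  rwa [conjTranspose_eq_transpose_of_trivial] at this

lemma my_trace_bound {p : ℕ} (A P : Matrix (Fin p) (Fin p) ℝ) (hP : P.PosSemidef)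
    (h : (A * Aᵀ).IsHermitian) (hl : 0 ≤ eigMax (A * Aᵀ) h) :
    (A * P * Aᵀ).trace ≤ eigMax (A * Aᵀ) h * P.trace := by
  set l := eigMax (A * Aᵀ) h with hldef
  have hN : (l • (1 : Matrix (Fin p) (Fin p) ℝ) - Aᵀ * A).PosSemidef := by
    refine posSemidef_iff_dotProduct_mulVec.mpr ⟨?_, ?_⟩
    · unfold Matrix.IsHermitian
      rw [conjTranspose_sub, conjTranspose_smul, conjTranspose_one, (my_AtA_herm A).eq,
        star_trivial]
    · intro x
      rw [star_trivial, sub_mulVec, dotProduct_sub, smul_mulVec, one_mulVec,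
        dotProduct_smul]
      have := my_op_bound A h hl x
      simp only [smul_eq_mul]
      linarith
  obtain ⟨B, hB⟩ := posSemidef_iff_eq_transpose_mul_self.mp hP
  have h0 : 0 ≤ ((l • (1 : Matrix (Fin p) (Fin p) ℝ) - Aᵀ * A) * P).trace := by
    rw [hB, ← mul_assoc, trace_mul_cycle]
    exact my_trace_nonneg (hN.mul_mul_conjTranspose_same B)
  have hexp : ((l • (1 : Matrix (Fin p) (Fin p) ℝ) - Aᵀ * A) * P).trace
      = l * P.trace - (Aᵀ * A * P).trace := by
    rw [sub_mul, smul_mul_assoc, one_mul, trace_sub, trace_smul, smul_eq_mul]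
  have htr' : (A * P * Aᵀ).trace = (Aᵀ * A * P).trace := by
    rw [trace_mul_cycle]
  rw [htr']
  linarith [h0, hexp.symm.le, hexp.le]

lemma my_det_le {p : ℕ} (hp : 1 ≤ p) {M : Matrix (Fin p) (Fin p) ℝ} (hM : M.PosSemidef) :
    M.det ≤ (M.trace / p) ^ p := by
  have hev : ∀ i, 0 ≤ hM.1.eigenvalues i := hM.eigenvalues_nonneg
  set z := hM.1.eigenvalues with hz
  have hdet : M.det = ∏ i, z i := by simpa using hM.1.det_eq_prod_eigenvalues
  rw [hdet, my_trace_eq_sum_eig hM.1]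
  have hppos : (0:ℝ) < p := by exact_mod_cast hp
  have hsum : ∑ _i : Fin p, (1:ℝ) = p := by simp
  have h := Real.geom_mean_le_arith_mean Finset.univ (fun _ => (1:ℝ)) z
    (fun _ _ => zero_le_one) (by rw [hsum]; exact hppos) (fun i _ => hev i)
  rw [hsum] at h
  simp only [one_mul, Real.rpow_one] at h
  have hprod : 0 ≤ ∏ i, z i := Finset.prod_nonneg (fun i _ => hev i)
  have h2 := Real.rpow_le_rpow (Real.rpow_nonneg hprod _) h (le_of_lt hppos)
  rw [← Real.rpow_natCast ((∑ i, z i) / p) p] 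
  rwa [← Real.rpow_mul hprod, inv_mul_cancel₀ (ne_of_gt hppos), Real.rpow_one] at h2


/-- If `trace P ≤ D` with `P ⪰ 0`, `Σ ⪰ 0`, then
`det(A·P·Aᵀ + Σ) ≤ ((λ_max(A·Aᵀ)·D + trace Σ)/p)^p`. -/
theorem stmt_10 {p : ℕ} (hp : 1 ≤ p) (A Sw P : Matrix (Fin p) (Fin p) ℝ)
    (hSw : Sw.PosSemidef) (D : ℝ) (hD : D > 0)
    (hP : P.PosSemidef) (htr : P.trace ≤ D) :
    (A * P * Aᵀ + Sw).det ≤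
      ((eigMax (A * Aᵀ) (isHermitian_mul_transpose_self_real A) * D + Sw.trace) / (p : ℝ)) ^ p := by
  have hH := isHermitian_mul_transpose_self_real A
  set l := eigMax (A * Aᵀ) hH with hl
  have hlnn : 0 ≤ l := my_eigMax_nonneg hp A hH
  have hMps : (A * P * Aᵀ + Sw).PosSemidef := by
    have h1 : (A * P * Aᵀ).PosSemidef := by
      have := hP.mul_mul_conjTranspose_same A
      rwa [conjTranspose_eq_transpose_of_trivial] at this
    exact h1.add hSw
  have hdet := my_det_le hp hMps
  refine le_trans hdet ?_
  have hppos : (0:ℝ) < p := by exact_mod_cast hp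
  have htrM : (A * P * Aᵀ + Sw).trace ≤ l * D + Sw.trace := by
    rw [trace_add]
    have h1 : (A * P * Aᵀ).trace ≤ l * P.trace := my_trace_bound A P hP hH hlnn
    have h2 : l * P.trace ≤ l * D := mul_le_mul_of_nonneg_left htr hlnn
    linarith
  have htrMnn : 0 ≤ (A * P * Aᵀ + Sw).trace := my_trace_nonneg hMps
  exact pow_le_pow_left₀ (div_nonneg htrMnn (le_of_lt hppos))
    (by gcongr) p
end

section
/- Let p ≥ 1 and n ≥ 0 be integers, A a p×p real matrix, Σ_w and Σ_{x₀} p×p real positive definite matrices, and D > 0. Let c = (1/2)·log det Σ_{x₀} + (n/2)·log det Σ_w. Then the following two infima are equal: (I) the infimum of (1/(n+1))·[ (1/2)·log det Σ_{x₀} − (1/2)·log det P₀ + ∑_{t=1}^{n} ( (1/2)·log det(A·P_{t−1}·Aᵀ + Σ_w) − (1/2)·log det P_t ) ] over all tuples (P₀, …, P_n) of p×p positive definite matrices with P₀ ⪯ Σ_{x₀}, P_t ⪯ A·P_{t−1}·Aᵀ + Σ_w for 1 ≤ t ≤ n, and trace(P_t) ≤ D for all t; and (II) the infimum of (1/(n+1))·(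 c − ∑_{t=0}^{n} (1/2)·log det Q_t ) over all tuples (P₀, …, P_n, Q₀, …, Q_n) of p×p positive definite matrices subject to the same constraints on the P_t together with Q_n = P_n and, for each t = 0, …, n−1, the 2p×2p block matrix [[P_t − Q_t, P_t·Aᵀ], [A·P_t, A·P_t·Aᵀ + Σ_w]] being positive semidefinite. (This identifies the finite-horizon Gaussian SRD optimization with a determinant-maximization / semidefinite program.) -/
open Matrix Finset
variable {m : Type*} [Fintype m] [DecidableEq m]

lemma aux_det_nonneg {M : Matrix m m ℝ} (hM : M.PosSemidef) : 0 ≤ M.det := by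
  rw [hM.1.det_eq_prod_eigenvalues]
  exact Finset.prod_nonneg fun i _ => by simpa using hM.eigenvalues_nonneg i

lemma aux_one_le_det_one_add {M : Matrix m m ℝ} (hM : M.PosSemidef) :
    1 ≤ (1 + M).det := by
  have hspec := hM.1.spectral_theorem
  set U : Matrix m m ℝ := (hM.1.eigenvectorUnitary : Matrix m m ℝ) with hUdef
  set f : m → ℝ := RCLike.ofReal ∘ hM.1.eigenvalues with hf
  have hUU : U * star U = 1 := mem_unitaryGroup_iff.mp hM.1.eigenvectorUnitary.2
  have h1 : (1 : Matrix m m ℝ) + M = U * (1 + diagonal f) * star U := by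
    rw [Matrix.mul_add, Matrix.add_mul, Matrix.mul_one, hUU]
    exact congrArg (1 + ·) hspec
  have h2 : det U * det (star U) = 1 := by rw [← det_mul, hUU, det_one]
  have hd : (1 + M).det = (1 + diagonal f).det := by
    rw [h1, det_mul, det_mul]; linear_combination (1 + diagonal f).det * h2
  rw [hd, ← Matrix.diagonal_one, Matrix.diagonal_add, det_diagonal]
  have : (∏ _i : m, (1:ℝ)) ≤ ∏ i : m, (1 + f) i := by
    refine Finset.prod_le_prod (fun i _ => zero_le_one) (fun i _ => ?_)
    have := hM.eigenvalues_nonneg i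
    simp only [hf, Pi.add_apply, Function.comp_apply, RCLike.ofReal_real_eq_id, id_eq,
      Pi.one_apply]
    linarith
  simpa using this

lemma aux_det_le_det {A B : Matrix m m ℝ} (hA : A.PosDef) (h : (B - A).PosSemidef) :
    A.det ≤ B.det := by
  open scoped MatrixOrder in set S := CFC.sqrt A with hSdef
  have hS : S.PosSemidef := by open scoped MatrixOrder in exact (CFC.sqrt_nonneg A).posSemidef
  have hSS : S * S = A := by
    open scoped MatrixOrder in exact CFC.sqrt_mul_sqrt_self A hA.posSemidef.nonneg
  have hdS : S.det * S.det = A.det := by rw [← det_mul, hSS]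
  have hdetA : (0:ℝ) < A.det := hA.det_pos
  have hSnn : 0 ≤ S.det := aux_det_nonneg hS
  have hSpos : 0 < S.det := by
    rcases hSnn.lt_or_eq with h' | h'
    · exact h'
    · exfalso; rw [← h', mul_zero] at hdS; linarith
  haveI : Invertible S := S.invertibleOfIsUnitDet (isUnit_iff_ne_zero.2 hSpos.ne')
  have hSHi : (S⁻¹)ᴴ = S⁻¹ := hS.1.inv
  have hN' : (S⁻¹ * (B - A) * S⁻¹).PosSemidef := by
    have := h.mul_mul_conjTranspose_same S⁻¹
    rwa [hSHi] at this
  have hB : B = S * (1 + S⁻¹ * (B - A) * S⁻¹) * S := by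
    have h1 : S * (S⁻¹ * (B - A) * S⁻¹) * S = B - A := by
      calc S * (S⁻¹ * (B - A) * S⁻¹) * S = S * S⁻¹ * (B - A) * (S⁻¹ * S) := by
            simp only [Matrix.mul_assoc]
        _ = B - A := by
            rw [Matrix.mul_inv_of_invertible, Matrix.inv_mul_of_invertible, Matrix.one_mul,
              Matrix.mul_one]
    rw [Matrix.mul_add, Matrix.add_mul, Matrix.mul_one, hSS, h1]
    abel
  have hone := aux_one_le_det_one_add hN'
  calc A.det = S.det * 1 * S.det := by rw [mul_one, hdS]
    _ ≤ S.det * (1 + S⁻¹ * (B - A) * S⁻¹).det * S.det := by nlinarith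
    _ = B.det := by conv_rhs => rw [hB, det_mul, det_mul]
variable {m : Type*} [Fintype m] [DecidableEq m]

lemma aux_posDef_of_det {Q : Matrix m m ℝ} (h : Q.PosSemidef) (hd : Q.det ≠ 0) : Q.PosDef := by
  haveI : Invertible Q := Q.invertibleOfIsUnitDet (isUnit_iff_ne_zero.2 hd)
  refine ⟨h.1, fun x hx => ?_⟩
  rcases (h.2 x).lt_or_eq with h' | h'
  · exact h'
  · exfalso
    exact ((h.posDef_iff_det_ne_zero.mpr hd).2 hx).ne h'

lemma aux_schur {p : ℕ} (A Sw : Matrix (Fin p) (Fin p) ℝ) (hSw : Sw.PosDef)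
    {P : Matrix (Fin p) (Fin p) ℝ} (hP : P.PosDef) :
    (A * P * Aᵀ + Sw).PosDef ∧
    (P - P * Aᵀ * (A * P * Aᵀ + Sw)⁻¹ * (A * P)).PosDef ∧
    (A * P * Aᵀ + Sw).det * (P - P * Aᵀ * (A * P * Aᵀ + Sw)⁻¹ * (A * P)).det
      = P.det * Sw.det ∧
    (Matrix.fromBlocks (P - (P - P * Aᵀ * (A * P * Aᵀ + Sw)⁻¹ * (A * P))) (P * Aᵀ) (A * P)
        (A * P * Aᵀ + Sw)).PosSemidef ∧
    ∀ Q : Matrix (Fin p) (Fin p) ℝ,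
      (Matrix.fromBlocks (P - Q) (P * Aᵀ) (A * P) (A * P * Aᵀ + Sw)).PosSemidef →
      ((P - P * Aᵀ * (A * P * Aᵀ + Sw)⁻¹ * (A * P)) - Q).PosSemidef := by
  have hPt : Pᵀ = P := by
    rw [← Matrix.conjTranspose_eq_transpose_of_trivial]; exact hP.1
  have hBH : (P * Aᵀ)ᴴ = A * P := by
    rw [conjTranspose_mul, Matrix.conjTranspose_eq_transpose_of_trivial,
      Matrix.conjTranspose_eq_transpose_of_trivial, transpose_transpose, hPt]
  have hS : (A * P * Aᵀ + Sw).PosDef := by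
    have h1 := hP.posSemidef.mul_mul_conjTranspose_same A
    rw [Matrix.conjTranspose_eq_transpose_of_trivial] at h1
    exact Matrix.PosDef.posSemidef_add h1 hSw
  set S : Matrix (Fin p) (Fin p) ℝ := A * P * Aᵀ + Sw with hSdef
  haveI : Invertible P := P.invertibleOfIsUnitDet (isUnit_iff_ne_zero.2 hP.det_pos.ne')
  haveI : Invertible S := S.invertibleOfIsUnitDet (isUnit_iff_ne_zero.2 hS.det_pos.ne')
  have hcanc : A * P * P⁻¹ * (P * Aᵀ) = A * P * Aᵀ := by
    rw [Matrix.mul_nonsing_inv_cancel_right P A (isUnit_iff_ne_zero.2 hP.det_pos.ne'),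
      ← Matrix.mul_assoc]
  have hMpsd : (Matrix.fromBlocks P (P * Aᵀ) (A * P) S).PosSemidef := by
    rw [← hBH, PosDef.fromBlocks₁₁ (P * Aᵀ) S hP, hBH, hcanc, hSdef, add_sub_cancel_left]
    exact hSw.posSemidef
  have hQspsd : (P - P * Aᵀ * S⁻¹ * (A * P)).PosSemidef := by
    rw [← hBH] at hMpsd ⊢
    exact (PosDef.fromBlocks₂₂ P (P * Aᵀ) hS).mp hMpsd
  have hdet1 : (Matrix.fromBlocks P (P * Aᵀ) (A * P) S).det = P.det * Sw.det := by
    rw [det_fromBlocks₁₁]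
    congr 1
    rw [invOf_eq_nonsing_inv, hcanc, hSdef, add_sub_cancel_left]
  have hdet2 : (Matrix.fromBlocks P (P * Aᵀ) (A * P) S).det
      = S.det * (P - P * Aᵀ * S⁻¹ * (A * P)).det := by
    rw [det_fromBlocks₂₂, invOf_eq_nonsing_inv]
  have hdeteq : S.det * (P - P * Aᵀ * S⁻¹ * (A * P)).det = P.det * Sw.det := by
    rw [← hdet2, hdet1]
  have hQsdet : (P - P * Aᵀ * S⁻¹ * (A * P)).det ≠ 0 := by
    intro h0
    rw [h0, mul_zero] at hdeteq
    exact absurd hdeteq.symm (mul_pos hP.det_pos hSw.det_pos).ne'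
  have hQs : (P - P * Aᵀ * S⁻¹ * (A * P)).PosDef := aux_posDef_of_det hQspsd hQsdet
  refine ⟨hS, hQs, hdeteq, ?_, ?_⟩
  · rw [sub_sub_cancel, ← hBH]
    refine (PosDef.fromBlocks₂₂ _ (P * Aᵀ) hS).mpr ?_
    rw [sub_self]
    exact Matrix.PosSemidef.zero
  · intro Q hQblk
    rw [← hBH] at hQblk
    have h2 := (PosDef.fromBlocks₂₂ (P - Q) (P * Aᵀ) hS).mp hQblk
    rw [hBH] at h2
    rwa [sub_right_comm] at h2

lemma aux_sum_eq {p n : ℕ} (A Sw Sx0 : Matrix (Fin p) (Fin p) ℝ)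
    (c : ℝ) (hc : c = (1/2) * Real.log Sx0.det + ((n:ℝ)/2) * Real.log Sw.det)
    (P Q : ℕ → Matrix (Fin p) (Fin p) ℝ)
    (hQn : Q n = P n)
    (hQd : ∀ t < n, Real.log (Q t).det
      = Real.log (P t).det + Real.log Sw.det - Real.log (A * P t * Aᵀ + Sw).det) :
    (1/2) * Real.log Sx0.det - (1/2) * Real.log (P 0).det +
      ∑ t ∈ Finset.Icc 1 n, ((1/2) * Real.log (A * P (t-1) * Aᵀ + Sw).det
        - (1/2) * Real.log (P t).det)
    = c - ∑ t ∈ Finset.range (n+1), (1/2) * Real.log (Q t).det := by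
  have hIcc : ∑ t ∈ Finset.Icc 1 n, ((1/2) * Real.log (A * P (t-1) * Aᵀ + Sw).det
        - (1/2) * Real.log (P t).det)
      = ∑ i ∈ Finset.range n, ((1/2) * Real.log (A * P i * Aᵀ + Sw).det
        - (1/2) * Real.log (P (i+1)).det) := by
    rw [← Finset.Ico_add_one_right_eq_Icc, Finset.sum_Ico_eq_sum_range]
    refine Finset.sum_congr (by norm_num) fun i _ => ?_
    have h1 : 1 + i - 1 = i := by omega
    have h2 : 1 + i = i + 1 := by omega
    rw [h1, h2]
  have hQsum : ∑ t ∈ Finset.range (n+1), (1/2) * Real.log (Q t).det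
      = ((∑ i ∈ Finset.range n, (1/2) * Real.log (P i).det)
          + (n:ℝ) * ((1/2) * Real.log Sw.det)
          - ∑ i ∈ Finset.range n, (1/2) * Real.log (A * P i * Aᵀ + Sw).det)
        + (1/2) * Real.log (P n).det := by
    rw [Finset.sum_range_succ, hQn]
    congr 1
    have : ∀ i ∈ Finset.range n, (1/2) * Real.log (Q i).det
        = ((1/2) * Real.log (P i).det + (1/2) * Real.log Sw.det)
          - (1/2) * Real.log (A * P i * Aᵀ + Sw).det := by
      intro i hi
      rw [hQd i (Finset.mem_range.mp hi)]
      ring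
    rw [Finset.sum_congr rfl this, Finset.sum_sub_distrib, Finset.sum_add_distrib,
      Finset.sum_const, Finset.card_range, nsmul_eq_mul]
  have hshift : (∑ i ∈ Finset.range n, (1/2) * Real.log (P (i+1)).det)
        + (1/2) * Real.log (P 0).det
      = (∑ i ∈ Finset.range n, (1/2) * Real.log (P i).det)
        + (1/2) * Real.log (P n).det := by
    rw [← Finset.sum_range_succ' (fun i => (1/2) * Real.log (P i).det) n,
      Finset.sum_range_succ]
  rw [hIcc, Finset.sum_sub_distrib, hQsum, hc]

  linarith

/-- Equality of the finite-horizon Gaussian SRD optimization (log-det form) with its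
determinant-maximization / semidefinite program reformulation. -/
theorem stmt_14 {p : ℕ} (hp : 1 ≤ p) (n : ℕ)
    (A Sw Sx0 : Matrix (Fin p) (Fin p) ℝ) (hSw : Sw.PosDef) (hSx0 : Sx0.PosDef)
    (D : ℝ) (hD : D > 0)
    (c : ℝ) (hc : c = (1 / 2) * Real.log Sx0.det + ((n : ℝ) / 2) * Real.log Sw.det) :
    sInf {x : EReal | ∃ P : ℕ → Matrix (Fin p) (Fin p) ℝ,
        (∀ t ≤ n, (P t).PosDef) ∧ (Sx0 - P 0).PosSemidef ∧
        (∀ t, 1 ≤ t → t ≤ n → (A * P (t - 1) * Aᵀ + Sw - P t).PosSemidef) ∧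
        (∀ t ≤ n, (P t).trace ≤ D) ∧
        x = (((n : ℝ) + 1)⁻¹ *
          ((1 / 2) * Real.log Sx0.det - (1 / 2) * Real.log (P 0).det +
            ∑ t ∈ Finset.Icc 1 n,
              ((1 / 2) * Real.log (A * P (t - 1) * Aᵀ + Sw).det -
                (1 / 2) * Real.log (P t).det)) : ℝ)} =
      sInf {x : EReal | ∃ P Q : ℕ → Matrix (Fin p) (Fin p) ℝ,
        (∀ t ≤ n, (P t).PosDef) ∧ (Sx0 - P 0).PosSemidef ∧
        (∀ t, 1 ≤ t → t ≤ n → (A * P (t - 1) * Aᵀ + Sw - P t).PosSemidef) ∧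
        (∀ t ≤ n, (P t).trace ≤ D) ∧
        (∀ t ≤ n, (Q t).PosDef) ∧ Q n = P n ∧
        (∀ t, t < n →
          (Matrix.fromBlocks (P t - Q t) (P t * Aᵀ) (A * P t)
            (A * P t * Aᵀ + Sw)).PosSemidef) ∧
        x = (((n : ℝ) + 1)⁻¹ *
          (c - ∑ t ∈ Finset.range (n + 1), (1 / 2) * Real.log (Q t).det) : ℝ)} := by
  classical
  have hninv : (0:ℝ) ≤ ((n : ℝ) + 1)⁻¹ := by positivity
  apply le_antisymm
  · -- sInf I ≤ sInf II
    refine le_sInf fun x hx => ?_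
    obtain ⟨P, Q, hP, h0, hrec, htr, hQ, hQn, hblk, hxval⟩ := hx
    set Qd : ℕ → Matrix (Fin p) (Fin p) ℝ :=
      fun t => if t = n then P n
        else P t - P t * Aᵀ * (A * P t * Aᵀ + Sw)⁻¹ * (A * P t) with hQddef
    have hQdn : Qd n = P n := if_pos rfl
    have hQdlog : ∀ t < n, Real.log (Qd t).det
        = Real.log (P t).det + Real.log Sw.det - Real.log (A * P t * Aᵀ + Sw).det := by
      intro t ht
      obtain ⟨hS, hQs, hdet, -, -⟩ := aux_schur A Sw hSw (hP t ht.le)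
      have hlog := congrArg Real.log hdet
      rw [Real.log_mul hS.det_pos.ne' hQs.det_pos.ne',
        Real.log_mul (hP t ht.le).det_pos.ne' hSw.det_pos.ne'] at hlog
      rw [hQddef]
      simp only [if_neg ht.ne]
      linarith
    have hsumeq := aux_sum_eq A Sw Sx0 c hc P Qd hQdn hQdlog
    have hsumle : ∑ t ∈ Finset.range (n+1), (1/2) * Real.log (Q t).det
        ≤ ∑ t ∈ Finset.range (n+1), (1/2) * Real.log (Qd t).det := by
      refine Finset.sum_le_sum fun t ht => ?_
      have ht' : t ≤ n := Nat.lt_succ_iff.mp (Finset.mem_range.mp ht)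
      by_cases htn : t = n
      · subst htn
        rw [hQdn, hQn]
      · have htlt : t < n := lt_of_le_of_ne ht' htn
        obtain ⟨-, -, -, -, hmono⟩ := aux_schur A Sw hSw (hP t ht')
        have hsub := hmono (Q t) (hblk t htlt)
        have hQdeq : Qd t = P t - P t * Aᵀ * (A * P t * Aᵀ + Sw)⁻¹ * (A * P t) := by
          rw [hQddef]; simp only [if_neg htn]
        rw [← hQdeq] at hsub
        have hdetle := aux_det_le_det (hQ t ht') hsub
        have hlogle := Real.log_le_log (hQ t ht').det_pos hdetle
        linarith
    calc sInf {x : EReal | ∃ P : ℕ → Matrix (Fin p) (Fin p) ℝ,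
        (∀ t ≤ n, (P t).PosDef) ∧ (Sx0 - P 0).PosSemidef ∧
        (∀ t, 1 ≤ t → t ≤ n → (A * P (t - 1) * Aᵀ + Sw - P t).PosSemidef) ∧
        (∀ t ≤ n, (P t).trace ≤ D) ∧
        x = (((n : ℝ) + 1)⁻¹ *
          ((1 / 2) * Real.log Sx0.det - (1 / 2) * Real.log (P 0).det +
            ∑ t ∈ Finset.Icc 1 n,
              ((1 / 2) * Real.log (A * P (t - 1) * Aᵀ + Sw).det -
                (1 / 2) * Real.log (P t).det)) : ℝ)}
        ≤ ((((n : ℝ) + 1)⁻¹ *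
          ((1 / 2) * Real.log Sx0.det - (1 / 2) * Real.log (P 0).det +
            ∑ t ∈ Finset.Icc 1 n,
              ((1 / 2) * Real.log (A * P (t - 1) * Aᵀ + Sw).det -
                (1 / 2) * Real.log (P t).det)) : ℝ) : EReal) :=
          sInf_le ⟨P, hP, h0, hrec, htr, rfl⟩
      _ ≤ x := by
          rw [hxval]
          apply EReal.coe_le_coe_iff.mpr
          rw [hsumeq]
          exact mul_le_mul_of_nonneg_left (sub_le_sub_left hsumle c) hninv
  · -- sInf II ≤ sInf I
    refine le_sInf fun x hx => ?_
    obtain ⟨P, hP, h0, hrec, htr, hxval⟩ := hx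
    set Qd : ℕ → Matrix (Fin p) (Fin p) ℝ :=
      fun t => if t = n then P n
        else P t - P t * Aᵀ * (A * P t * Aᵀ + Sw)⁻¹ * (A * P t) with hQddef
    have hQdn : Qd n = P n := if_pos rfl
    have hQdlog : ∀ t < n, Real.log (Qd t).det
        = Real.log (P t).det + Real.log Sw.det - Real.log (A * P t * Aᵀ + Sw).det := by
      intro t ht
      obtain ⟨hS, hQs, hdet, -, -⟩ := aux_schur A Sw hSw (hP t ht.le)
      have hlog := congrArg Real.log hdet
      rw [Real.log_mul hS.det_pos.ne' hQs.det_pos.ne',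
        Real.log_mul (hP t ht.le).det_pos.ne' hSw.det_pos.ne'] at hlog
      rw [hQddef]
      simp only [if_neg ht.ne]
      linarith
    have hQdpd : ∀ t ≤ n, (Qd t).PosDef := by
      intro t ht
      by_cases htn : t = n
      · rw [htn, hQdn]; exact hP n le_rfl
      · obtain ⟨-, hQs, -, -, -⟩ := aux_schur A Sw hSw (hP t ht)
        rw [hQddef]; simpa only [if_neg htn] using hQs
    have hQdblk : ∀ t, t < n →
        (Matrix.fromBlocks (P t - Qd t) (P t * Aᵀ) (A * P t)
          (A * P t * Aᵀ + Sw)).PosSemidef := by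
      intro t ht
      obtain ⟨-, -, -, hb, -⟩ := aux_schur A Sw hSw (hP t ht.le)
      rw [hQddef]
      simpa only [if_neg ht.ne] using hb
    have hsumeq := aux_sum_eq A Sw Sx0 c hc P Qd hQdn hQdlog
    refine sInf_le ⟨P, Qd, hP, h0, hrec, htr, hQdpd, hQdn, hQdblk, ?_⟩
    rw [hxval, hsumeq]
end

section
/- Let A be a p×p real matrix, Σ_w a p×p real positive definite matrix, and D > 0. Then the feasible set of the semidefinite program representing the asymptotic Gaussian SRD function is nonempty: there exist p×p real positive definite matrices P and Q such that P ⪯ A·P·Aᵀ + Σ_w, trace(P) ≤ D, and the 2p×2p block matrix [[P − Q, P·Aᵀ], [A·P, A·P·Aᵀ + Σ_w]] is positive semidefinite. (For instance, P = ε·I_p with 0 < ε ≤ min{D/p, λ_min(Σ_w)} and Q = (P⁻¹ + Aᵀ·Σ_w⁻¹·A)⁻¹ are feasible.) -/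
open Matrix

lemma my_smul_psd {n : ℕ} {M : Matrix (Fin n) (Fin n) ℝ} (hM : M.PosSemidef) {c : ℝ}
    (hc : 0 ≤ c) : (c • M).PosSemidef := by
  refine ⟨?_, fun x => ?_⟩
  · unfold Matrix.IsHermitian
    rw [conjTranspose_smul, star_trivial, hM.1.eq]
  · exact (hM.smul hc).2 x

lemma my_smul_pd {n : ℕ} {M : Matrix (Fin n) (Fin n) ℝ} (hM : M.PosDef) {c : ℝ}
    (hc : 0 < c) : (c • M).PosDef := by
  refine ⟨?_, fun x hx => ?_⟩
  · unfold Matrix.IsHermitian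
    rw [conjTranspose_smul, star_trivial, hM.1.eq]
  · exact (hM.smul hc).2 hx

lemma my_exists_pos_le {ι : Type*} [Fintype ι] (f : ι → ℝ) (hf : ∀ i, 0 < f i) :
    ∃ ε > 0, ∀ i, ε ≤ f i := by
  cases isEmpty_or_nonempty ι with
  | inl h => exact ⟨1, one_pos, fun i => isEmptyElim i⟩
  | inr h =>
    refine ⟨Finset.univ.inf' Finset.univ_nonempty f, ?_, fun i => Finset.inf'_le _ (Finset.mem_univ i)⟩
    exact (Finset.lt_inf'_iff _).mpr fun i _ => hf i

lemma my_sub_smul_one_psd {n : ℕ} {M : Matrix (Fin n) (Fin n) ℝ} (hM : M.PosDef) :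
    ∃ ε : ℝ, 0 < ε ∧ (M - ε • 1).PosSemidef := by
  obtain ⟨ε, hε, hle⟩ := my_exists_pos_le hM.1.eigenvalues hM.eigenvalues_pos
  refine ⟨ε, hε, ?_⟩
  have hU : (hM.1.eigenvectorUnitary : Matrix (Fin n) (Fin n) ℝ) *
      star (hM.1.eigenvectorUnitary : Matrix (Fin n) (Fin n) ℝ) = 1 :=
    (Matrix.mem_unitaryGroup_iff).mp hM.1.eigenvectorUnitary.2
  have h1 : M - ε • 1 = (hM.1.eigenvectorUnitary : Matrix (Fin n) (Fin n) ℝ) *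
      diagonal (fun i => hM.1.eigenvalues i - ε) *
      star (hM.1.eigenvectorUnitary : Matrix (Fin n) (Fin n) ℝ) := by
    have h2 := hM.1.spectral_theorem
    have h3 : (ε • 1 : Matrix (Fin n) (Fin n) ℝ) =
        (hM.1.eigenvectorUnitary : Matrix (Fin n) (Fin n) ℝ) * (ε • 1) *
        star (hM.1.eigenvectorUnitary : Matrix (Fin n) (Fin n) ℝ) := by
      rw [Matrix.mul_smul, Matrix.mul_one, Matrix.smul_mul, hU]
    rw [h3]
    nth_rewrite 1 [h2]
    rw [Unitary.conjStarAlgAut_apply, ← Matrix.sub_mul, ← Matrix.mul_sub]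
    congr 2
    ext i j
    by_cases h : i = j <;>
      simp [Matrix.diagonal_apply, Matrix.one_apply, h, Matrix.sub_apply]
  rw [h1, Matrix.star_eq_conjTranspose]
  exact Matrix.PosSemidef.mul_mul_conjTranspose_same
    (Matrix.posSemidef_diagonal_iff.mpr fun i => sub_nonneg.mpr (hle i)) _

/-- The feasible set of the semidefinite program representing the asymptotic Gaussian
SRD function is nonempty: there exist `P ≻ 0`, `Q ≻ 0` with `P ⪯ A·P·Aᵀ + Σ_w`,
`trace P ≤ D`, and `[[P − Q, P·Aᵀ], [A·P, A·P·Aᵀ + Σ_w]] ⪰ 0`. -/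
theorem stmt_15 {p : ℕ} (A Sw : Matrix (Fin p) (Fin p) ℝ) (hSw : Sw.PosDef)
    (D : ℝ) (hD : D > 0) :
    ∃ P Q : Matrix (Fin p) (Fin p) ℝ, P.PosDef ∧ Q.PosDef ∧
      (A * P * Aᵀ + Sw - P).PosSemidef ∧ P.trace ≤ D ∧
      (Matrix.fromBlocks (P - Q) (P * Aᵀ) (A * P) (A * P * Aᵀ + Sw)).PosSemidef := by
  obtain ⟨ε₀, hε₀, hpsd0⟩ := my_sub_smul_one_psd hSw
  have hp1 : (0:ℝ) < p + 1 := by positivity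
  set ε : ℝ := min ε₀ (D / (p + 1)) with hεdef
  have hε : 0 < ε := lt_min hε₀ (by positivity)
  have hAt : Aᴴ = Aᵀ := by ext i j; simp [conjTranspose_apply]
  set P : Matrix (Fin p) (Fin p) ℝ := ε • 1 with hP
  have hAP : A * P = ε • A := by rw [hP, Matrix.mul_smul, Matrix.mul_one]
  have hPA : P * Aᵀ = ε • Aᵀ := by rw [hP, Matrix.smul_mul, Matrix.one_mul]
  have hAPA : A * P * Aᵀ = ε • (A * Aᵀ) := by rw [hAP, Matrix.smul_mul]
  have hAAt : (A * Aᵀ).PosSemidef := by rw [← hAt]; exact posSemidef_self_mul_conjTranspose A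
  set S : Matrix (Fin p) (Fin p) ℝ := A * P * Aᵀ + Sw with hSdef
  have hSeq : S = ε • (A * Aᵀ) + Sw := by rw [hSdef, hAPA]
  have hS : S.PosDef := by
    rw [hSeq]; exact Matrix.PosDef.posSemidef_add (my_smul_psd hAAt hε.le) hSw
  haveI : Invertible S := hS.isUnit.invertible
  have hSinv : S⁻¹ * S = 1 := Matrix.nonsing_inv_mul S ((Matrix.isUnit_iff_isUnit_det S).mp hS.isUnit)
  have hSwinv : Sw⁻¹ * Sw = 1 := Matrix.nonsing_inv_mul Sw ((Matrix.isUnit_iff_isUnit_det Sw).mp hSw.isUnit)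
  have hSwinv2 : Sw * Sw⁻¹ = 1 := Matrix.mul_nonsing_inv Sw ((Matrix.isUnit_iff_isUnit_det Sw).mp hSw.isUnit)
  set T : Matrix (Fin p) (Fin p) ℝ := Aᵀ * S⁻¹ * A with hT
  set Q : Matrix (Fin p) (Fin p) ℝ := ε • 1 - (ε^2) • T with hQdef
  set R : Matrix (Fin p) (Fin p) ℝ := ε⁻¹ • 1 + Aᵀ * Sw⁻¹ * A with hRdef
  have hid : ε • (S⁻¹ * (A * Aᵀ)) = 1 - S⁻¹ * Sw := by
    have h4 := hSinv
    nth_rewrite 2 [hSeq] at h4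
    rw [Matrix.mul_add, Matrix.mul_smul] at h4
    rw [eq_sub_iff_add_eq]
    exact h4
  have key : (ε^2) • (T * (Aᵀ * Sw⁻¹ * A)) = ε • (Aᵀ * Sw⁻¹ * A) - ε • T := by
    have h5 := congrArg (fun X : Matrix (Fin p) (Fin p) ℝ => ε • (Aᵀ * (X * (Sw⁻¹ * A)))) hid
    simp only [Matrix.smul_mul, Matrix.mul_smul, smul_smul, Matrix.sub_mul, Matrix.mul_sub,
      Matrix.one_mul] at h5
    calc (ε^2) • (T * (Aᵀ * Sw⁻¹ * A))
        = ε • (Aᵀ * ((ε • (S⁻¹ * (A * Aᵀ))) * (Sw⁻¹ * A))) := by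
          simp only [hT, Matrix.smul_mul, Matrix.mul_smul, smul_smul, Matrix.mul_assoc]
          ring_nf
      _ = ε • (Aᵀ * Sw⁻¹ * A) - ε • T := by
          rw [hid]
          simp only [hT, Matrix.sub_mul, Matrix.mul_sub, Matrix.one_mul, smul_sub,
            Matrix.mul_assoc, hSwinv2]
          rw [show S⁻¹ * (Sw * (Sw⁻¹ * A)) = S⁻¹ * A by rw [← Matrix.mul_assoc Sw, hSwinv2, Matrix.one_mul]]
  have hQR : Q * R = 1 := by
    have expand : Q * R = (ε * ε⁻¹) • 1 + ε • (Aᵀ * Sw⁻¹ * A) - (ε^2 * ε⁻¹) • T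
        - (ε^2) • (T * (Aᵀ * Sw⁻¹ * A)) := by
      rw [hQdef, hRdef]
      simp only [Matrix.sub_mul, Matrix.mul_add, Matrix.smul_mul, Matrix.mul_smul,
        Matrix.one_mul, Matrix.mul_one, smul_smul]
      module
    rw [expand, key, mul_inv_cancel₀ hε.ne', one_smul,
      show ε^2 * ε⁻¹ = ε by field_simp]
    module
  have hR : R.PosDef := by
    rw [hRdef]
    refine Matrix.PosDef.add_posSemidef (my_smul_pd Matrix.PosDef.one (by positivity)) ?_
    rw [← hAt]
    exact hSw.inv.posSemidef.conjTranspose_mul_mul_same A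
  have hQeq : R⁻¹ = Q := Matrix.inv_eq_left_inv hQR
  have hQ : Q.PosDef := hQeq ▸ hR.inv
  refine ⟨P, Q, my_smul_pd Matrix.PosDef.one hε, hQ, ?_, ?_, ?_⟩
  · have : A * P * Aᵀ + Sw - P = ε • (A * Aᵀ) + ((Sw - ε₀ • 1) + (ε₀ - ε) • (1:Matrix (Fin p) (Fin p) ℝ)) := by
      rw [hAPA, hP]; module
    rw [this]
    exact (my_smul_psd hAAt hε.le).add (hpsd0.add
      (my_smul_psd Matrix.PosDef.one.posSemidef (sub_nonneg.mpr (min_le_left _ _))))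
  · rw [hP, Matrix.trace_smul, Matrix.trace_one]
    have h6 : ε ≤ D / (p + 1) := min_le_right _ _
    have h7 : (Fintype.card (Fin p) : ℝ) = p := by simp
    rw [h7, smul_eq_mul]
    have h8 : (p:ℝ) ≤ p + 1 := by linarith
    calc ε * p ≤ (D / (p+1)) * (p+1) := by
          apply mul_le_mul h6 h8 (Nat.cast_nonneg p) (le_of_lt (by positivity))
      _ = D := by field_simp
  · have hB : A * P = (P * Aᵀ)ᴴ := by
      rw [hPA, hAP]
      ext i j
      simp [conjTranspose_apply]
    rw [show A * P * Aᵀ + Sw = S from hSdef.symm, hB,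
      Matrix.PosDef.fromBlocks₂₂ _ _ hS]
    have hzero : P - Q - P * Aᵀ * S⁻¹ * (P * Aᵀ)ᴴ = 0 := by
      rw [← hB, hPA, hAP, hQdef, hP]
      simp only [Matrix.smul_mul, Matrix.mul_smul, smul_smul, hT]
      module
    rw [hzero]
    exact Matrix.PosSemidef.zero
end
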